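/- arXiv:1910.06021 — 6 statements merged into one kernel-verified Lean document; each statement's English description precedes it below -/
import Mathlib

section
/- Let 0 < λ ≤ 1 and −1 ≤ B < A ≤ 0. For every n ∈ ℕ (n ≥ 0) one has Σ_{k=0}^{n} ([λ]_k / k!) · ((λ)_{n−k} / (n−k)!) · A^k · (−B)^{n−k} > 0. (In particular, all Taylor coefficients a_n(A,B,λ) of v_λ(A,B,z) = ((1+Az)/(1+Bz))^λ about z = 0 are strictly positive.) -/
open Finset Polynomial

lemma descSmeval_eq_eval (k : ℕ) (x : ℝ) :
    (descPochhammer ℤ k).smeval x = (descPochhammer ℝ k).eval x := by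
  rw [← Polynomial.aeval_eq_smeval, aeval_def, eval₂_eq_eval_map, descPochhammer_map]

/-- Chu–Vandermonde for the falling factorial over `ℝ`. -/
lemma descPochhammer_eval_add_real (x y : ℝ) (n : ℕ) :
    (descPochhammer ℝ n).eval (x + y) = ∑ k ∈ range (n + 1),
      (n.choose k : ℝ) * ((descPochhammer ℝ k).eval x * (descPochhammer ℝ (n - k)).eval y) := by
  have h := Ring.descPochhammer_smeval_add (R := ℝ) (r := x) (s := y) n (Commute.all x y)
  rw [Finset.Nat.sum_antidiagonal_eq_sum_range_succ
    (fun i j => (n.choose i : ℝ) *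
      ((descPochhammer ℤ i).smeval x * (descPochhammer ℤ j).smeval y)) n] at h
  simpa [descSmeval_eq_eval] using h

lemma key_sum (l : ℝ) {n : ℕ} (hn : 1 ≤ n) :
    ∑ k ∈ range (n + 1), (-1 : ℝ) ^ k * ((descPochhammer ℝ k).eval l / k.factorial) *
      ((ascPochhammer ℝ (n - k)).eval l / (n - k).factorial) = 0 := by
  have h0 : (descPochhammer ℝ n).eval (l + (-l)) = 0 := by
    simp [descPochhammer_eval_zero, Nat.one_le_iff_ne_zero.mp hn]
  rw [descPochhammer_eval_add_real] at h0
  have hneg : ∀ m : ℕ, (ascPochhammer ℝ m).eval l =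
      (-1 : ℝ) ^ m * (descPochhammer ℝ m).eval (-l) := by
    intro m
    simpa using ascPochhammer_eval_neg_eq_descPochhammer ℝ (-l) m
  have : ∑ k ∈ range (n + 1), (-1 : ℝ) ^ k * ((descPochhammer ℝ k).eval l / k.factorial) *
      ((ascPochhammer ℝ (n - k)).eval l / (n - k).factorial)
      = ((-1 : ℝ) ^ n / n.factorial) * ∑ k ∈ range (n + 1),
        (n.choose k : ℝ) * ((descPochhammer ℝ k).eval l * (descPochhammer ℝ (n - k)).eval (-l)) := by
    rw [Finset.mul_sum]
    refine sum_congr rfl fun k hk => ?_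
    have hk' : k ≤ n := Nat.lt_succ_iff.mp (mem_range.mp hk)
    have hs : (-1 : ℝ) ^ k * (-1 : ℝ) ^ (n - k) = (-1 : ℝ) ^ n := by
      rw [← pow_add, Nat.add_sub_cancel' hk']
    have hkf : (k.factorial : ℝ) ≠ 0 := Nat.cast_ne_zero.mpr k.factorial_ne_zero
    have hnkf : ((n - k).factorial : ℝ) ≠ 0 := Nat.cast_ne_zero.mpr (n - k).factorial_ne_zero
    have hnf : (n.factorial : ℝ) ≠ 0 := Nat.cast_ne_zero.mpr n.factorial_ne_zero
    rw [hneg (n - k), Nat.cast_choose ℝ hk', ← hs]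
    field_simp
  rw [this, h0, mul_zero]

lemma desc_sign {l : ℝ} (hl0 : 0 < l) (hl1 : l ≤ 1) :
    ∀ k : ℕ, 1 ≤ k → (-1 : ℝ) ^ k * (descPochhammer ℝ k).eval l ≤ 0 := by
  intro k hk
  induction k with
  | zero => omega
  | succ k ih =>
    rcases Nat.eq_zero_or_pos k with rfl | hk1
    · simp [descPochhammer_one]
      linarith
    · have h1 := ih hk1
      rw [descPochhammer_succ_eval]
      have h2 : l - (k : ℝ) ≤ 0 := by
        have : (1 : ℝ) ≤ (k : ℝ) := by exact_mod_cast hk1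
        linarith
      have : (-1 : ℝ) ^ (k + 1) * ((descPochhammer ℝ k).eval l * (l - k))
          = ((-1 : ℝ) ^ k * (descPochhammer ℝ k).eval l) * (-(l - k)) := by ring
      rw [this]
      exact mul_nonpos_of_nonpos_of_nonneg h1 (by linarith)

/-- The Taylor coefficient `a_n(A,B,λ)` of `v_λ(A,B,z) = ((1+Az)/(1+Bz))^λ` about `z = 0`:
`a_n = ∑_{k=0}^{n} ([λ]_k / k!) ((λ)_{n−k} / (n−k)!) A^k (−B)^{n−k}`, where `[λ]_k` is the
falling factorial and `(λ)_k` the Pochhammer (rising factorial). -/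
noncomputable def janowskiCoeff (l A B : ℝ) (n : ℕ) : ℝ :=
  ∑ k ∈ Finset.range (n + 1),
    ((descPochhammer ℝ k).eval l / (k.factorial : ℝ)) *
      ((ascPochhammer ℝ (n - k)).eval l / ((n - k).factorial : ℝ)) * A ^ k * (-B) ^ (n - k)

theorem coeff_pos (l A B : ℝ) (hl0 : 0 < l) (hl1 : l ≤ 1)
    (hB : -1 ≤ B) (hBA : B < A) (hA : A ≤ 0) (n : ℕ) :
    0 < janowskiCoeff l A B n := by
  rcases Nat.eq_zero_or_pos n with rfl | hn
  · simp [janowskiCoeff]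
  set a : ℝ := -A with ha
  set b : ℝ := -B with hb
  have ha0 : 0 ≤ a := by simp [ha]; linarith
  have hab : a < b := by simp [ha, hb]; linarith
  have hb0 : 0 < b := lt_of_le_of_lt ha0 hab
  set u : ℕ → ℝ := fun k => (-1 : ℝ) ^ k * ((descPochhammer ℝ k).eval l / k.factorial) *
      ((ascPochhammer ℝ (n - k)).eval l / (n - k).factorial) with hu
  have hcoeff : janowskiCoeff l A B n = ∑ k ∈ range (n + 1), u k * (a ^ k * b ^ (n - k)) := by
    unfold janowskiCoeff
    refine sum_congr rfl fun k hk => ?_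
    have hA' : A = -a := by simp [ha]
    have hB' : -B = b := by simp [hb]
    rw [hA', hB', hu, neg_pow]
    ring
  have hsum : ∑ k ∈ range (n + 1), u k = 0 := key_sum l hn
  have hre : janowskiCoeff l A B n
      = ∑ k ∈ range (n + 1), u k * (a ^ k * b ^ (n - k) - b ^ n) := by
    rw [hcoeff]
    have : ∑ k ∈ range (n + 1), u k * (a ^ k * b ^ (n - k) - b ^ n)
        = (∑ k ∈ range (n + 1), u k * (a ^ k * b ^ (n - k)))
          - (∑ k ∈ range (n + 1), u k) * b ^ n := by
      rw [Finset.sum_mul, ← Finset.sum_sub_distrib]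
      exact sum_congr rfl fun k _ => by ring
    rw [this, hsum, zero_mul, sub_zero]
  rw [hre]
  have hasc : ∀ m : ℕ, 0 < (ascPochhammer ℝ m).eval l := fun m => ascPochhammer_pos m l hl0
  have hunonpos : ∀ k : ℕ, 1 ≤ k → u k ≤ 0 := by
    intro k hk
    have h1 := desc_sign hl0 hl1 k hk
    have hkf : (0 : ℝ) < k.factorial := by exact_mod_cast k.factorial_pos
    have hnkf : (0 : ℝ) < (n - k).factorial := by exact_mod_cast (n - k).factorial_pos
    have h2 : (-1 : ℝ) ^ k * ((descPochhammer ℝ k).eval l / k.factorial) ≤ 0 := by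
      rw [mul_div_assoc']
      exact div_nonpos_of_nonpos_of_nonneg h1 hkf.le
    exact mul_nonpos_of_nonpos_of_nonneg h2 (div_nonneg (hasc _).le hnkf.le)
  apply Finset.sum_pos'
  · intro k hk
    rcases Nat.eq_zero_or_pos k with rfl | hk1
    · simp
    · have hk' : k ≤ n := Nat.lt_succ_iff.mp (mem_range.mp hk)
      have h1 : a ^ k ≤ b ^ k := pow_le_pow_left₀ ha0 hab.le k
      have h2 : a ^ k * b ^ (n - k) ≤ b ^ k * b ^ (n - k) :=
        mul_le_mul_of_nonneg_right h1 (pow_nonneg hb0.le _)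
      rw [← pow_add, Nat.add_sub_cancel' hk'] at h2
      have h3 := hunonpos k hk1
      nlinarith
  · refine ⟨1, mem_range.mpr (by omega), ?_⟩
    have hu1 : u 1 < 0 := by
      rw [hu]
      simp only [pow_one, descPochhammer_one, eval_X, Nat.factorial_one, Nat.cast_one, div_one]
      have hnkf : (0 : ℝ) < (n - 1).factorial := by exact_mod_cast (n - 1).factorial_pos
      have : 0 < (ascPochhammer ℝ (n - 1)).eval l / (n - 1).factorial :=
        div_pos (hasc _) hnkf
      nlinarith
    have hlt : a ^ 1 * b ^ (n - 1) - b ^ n < 0 := by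
      have hbn : b ^ n = b * b ^ (n - 1) := by
        rw [← pow_succ']
        congr 1
        omega
      have : a * b ^ (n - 1) < b * b ^ (n - 1) :=
        mul_lt_mul_of_pos_right hab (pow_pos hb0 _)
      rw [hbn, pow_one]
      linarith
    exact mul_pos_of_neg_of_neg hu1 hlt
end

section
/- Let 0 < λ ≤ 1 and −1 ≤ B < A ≤ 0, and let a_n = a_n(A,B,λ) denote the Taylor coefficients of v_λ(A,B,z). Then for all m, n ∈ ℕ (m, n ≥ 1), (m+1)(n+1) a_{n+1} + m n B a_n ≥ 0. -/
open Finset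

noncomputable def jc (l : ℝ) (k : ℕ) : ℝ := (descPochhammer ℝ k).eval l / k.factorial
noncomputable def jd (l : ℝ) (k : ℕ) : ℝ := (ascPochhammer ℝ k).eval l / k.factorial

lemma jc_rec (l : ℝ) (k : ℕ) : ((k:ℝ)+1) * jc l (k+1) = (l - k) * jc l k := by
  have h : (k.factorial : ℝ) ≠ 0 := Nat.cast_ne_zero.mpr k.factorial_ne_zero
  simp only [jc, descPochhammer_succ_eval, Nat.factorial_succ]
  push_cast
  field_simp

lemma jd_rec (l : ℝ) (k : ℕ) : ((k:ℝ)+1) * jd l (k+1) = (l + k) * jd l k := by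
  have h : (k.factorial : ℝ) ≠ 0 := Nat.cast_ne_zero.mpr k.factorial_ne_zero
  simp only [jd, ascPochhammer_succ_eval, Nat.factorial_succ]
  push_cast
  field_simp

lemma jd_nonneg (l : ℝ) (hl : 0 < l) (q : ℕ) : 0 ≤ jd l q := by
  have : 0 ≤ (ascPochhammer ℝ q).eval l := by
    induction q with
    | zero => simp
    | succ q ih =>
      rw [ascPochhammer_succ_eval]
      exact mul_nonneg ih (by positivity)
  exact div_nonneg this (by positivity)

lemma desc_mul_pow_nonneg (l A : ℝ) (hl0 : 0 < l) (hl1 : l ≤ 1) (hA : A ≤ 0) (p : ℕ) :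
    0 ≤ (descPochhammer ℝ (p+1)).eval l * A ^ p := by
  induction p with
  | zero => simpa [descPochhammer] using hl0.le
  | succ p ih =>
    have h1 : (descPochhammer ℝ (p+1+1)).eval l * A ^ (p+1)
        = ((descPochhammer ℝ (p+1)).eval l * A ^ p) * ((l - (p+1:ℕ)) * A) := by
      rw [descPochhammer_succ_eval]; ring
    rw [h1]
    have h2 : l - ((p:ℝ)+1) ≤ 0 := by linarith
    have h3 : 0 ≤ (l - ((p+1:ℕ):ℝ)) * A := by
      push_cast
      nlinarith [mul_nonneg (neg_nonneg.mpr h2) (neg_nonneg.mpr hA)]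
    exact mul_nonneg ih h3

lemma jc_mul_pow_nonneg (l A : ℝ) (hl0 : 0 < l) (hl1 : l ≤ 1) (hA : A ≤ 0) (p : ℕ) :
    0 ≤ jc l (p+1) * A ^ p := by
  have := desc_mul_pow_nonneg l A hl0 hl1 hA p
  have hf : (0:ℝ) < ((p+1).factorial : ℝ) := by positivity
  rw [jc, div_mul_eq_mul_div]
  exact div_nonneg this hf.le

lemma key (l A B : ℝ) (n : ℕ) :
    ((n:ℝ)+1) * janowskiCoeff l A B (n+1) + (n:ℝ) * B * janowskiCoeff l A B n
    = (A - B) * ∑ k ∈ range (n+1),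
        ((l - k) * jc l k) * jd l (n-k) * A ^ k * (-B) ^ (n-k) := by
  have hjan : ∀ N : ℕ, janowskiCoeff l A B N
      = ∑ k ∈ range (N+1), jc l k * jd l (N-k) * A ^ k * (-B) ^ (N-k) := by
    intro N; rfl
  -- Step 1: split (n+1) = k + (n+1-k)
  have h1 : ((n:ℝ)+1) * janowskiCoeff l A B (n+1)
      = (∑ k ∈ range (n+2), (k:ℝ) * (jc l k * jd l (n+1-k) * A ^ k * (-B) ^ (n+1-k)))
      + (∑ k ∈ range (n+2), ((n+1-k : ℕ):ℝ) * (jc l k * jd l (n+1-k) * A ^ k * (-B) ^ (n+1-k))) := by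
    rw [hjan, Finset.mul_sum, ← Finset.sum_add_distrib]
    apply Finset.sum_congr rfl
    intro k hk
    have hk' : k ≤ n+1 := Nat.lt_succ_iff.mp (Finset.mem_range.mp hk)
    have hc : ((n+1-k:ℕ):ℝ) = (n:ℝ)+1-(k:ℝ) := by
      push_cast [Nat.cast_sub hk']; ring
    rw [hc]; ring
  -- Step 2: the "k" part
  have h2 : (∑ k ∈ range (n+2), (k:ℝ) * (jc l k * jd l (n+1-k) * A ^ k * (-B) ^ (n+1-k)))
      = A * ∑ k ∈ range (n+1), ((l - k) * jc l k) * jd l (n-k) * A ^ k * (-B) ^ (n-k) := by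
    rw [Finset.sum_range_succ']
    simp only [Nat.cast_zero, zero_mul, add_zero]
    rw [Finset.mul_sum]
    apply Finset.sum_congr rfl
    intro p _
    have e1 : n + 1 - (p+1) = n - p := by omega
    rw [e1, ← jc_rec l p]
    push_cast
    ring
  -- Step 3: the "n+1-k" part
  have h3 : (∑ k ∈ range (n+2), ((n+1-k : ℕ):ℝ) * (jc l k * jd l (n+1-k) * A ^ k * (-B) ^ (n+1-k)))
      = (-B) * ∑ k ∈ range (n+1), (l + ((n-k:ℕ):ℝ)) * (jc l k * jd l (n-k) * A ^ k * (-B) ^ (n-k)) := by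
    rw [Finset.sum_range_succ]
    simp only [Nat.sub_self, Nat.cast_zero, zero_mul, add_zero]
    rw [Finset.mul_sum]
    apply Finset.sum_congr rfl
    intro k hk
    have hk' : k ≤ n := Nat.lt_succ_iff.mp (Finset.mem_range.mp hk)
    have e1 : n + 1 - k = (n-k)+1 := by omega
    rw [e1]
    have hrec := jd_rec l (n-k)
    push_cast
    linear_combination (jc l k * A ^ k * (-B) ^ (n-k) * (-B)) * hrec
  -- Step 4: combine the "n+1-k" part with n*B*a_n
  have h4 : (-B) * (∑ k ∈ range (n+1), (l + ((n-k:ℕ):ℝ)) * (jc l k * jd l (n-k) * A ^ k * (-B) ^ (n-k)))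
        + (n:ℝ) * B * janowskiCoeff l A B n
      = (-B) * ∑ k ∈ range (n+1), ((l - k) * jc l k) * jd l (n-k) * A ^ k * (-B) ^ (n-k) := by
    rw [hjan, Finset.mul_sum, Finset.mul_sum, Finset.mul_sum, ← Finset.sum_add_distrib]
    apply Finset.sum_congr rfl
    intro k hk
    have hk' : k ≤ n := Nat.lt_succ_iff.mp (Finset.mem_range.mp hk)
    have hc : ((n-k:ℕ):ℝ) = (n:ℝ)-(k:ℝ) := by
      push_cast [Nat.cast_sub hk']; ring
    rw [hc]; ring
  rw [h1, h2, add_assoc, h3, h4]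
  ring

lemma S_nonneg (l A B : ℝ) (hl0 : 0 < l) (hl1 : l ≤ 1) (hB : B ≤ 0) (hA : A ≤ 0) (n : ℕ) :
    0 ≤ ∑ k ∈ range (n+1), ((l - k) * jc l k) * jd l (n-k) * A ^ k * (-B) ^ (n-k) := by
  apply Finset.sum_nonneg
  intro k _
  have h1 : ((l - k) * jc l k) * jd l (n-k) * A ^ k * (-B) ^ (n-k)
      = (((k:ℝ)+1) * (jc l (k+1) * A ^ k)) * (jd l (n-k) * (-B) ^ (n-k)) := by
    rw [← jc_rec l k]; ring
  rw [h1]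
  have h2 : (0:ℝ) ≤ (-B) ^ (n-k) := pow_nonneg (by linarith) _
  exact mul_nonneg (mul_nonneg (by positivity) (jc_mul_pow_nonneg l A hl0 hl1 hA k))
    (mul_nonneg (jd_nonneg l hl0 _) h2)

lemma janowskiCoeff_nonneg (l A B : ℝ) (hl0 : 0 < l) (hl1 : l ≤ 1) (hB : B ≤ 0) (hA : A ≤ 0)
    (hBA : B ≤ A) (n : ℕ) : 0 ≤ janowskiCoeff l A B n := by
  induction n with
  | zero => simp [janowskiCoeff]
  | succ n ih =>
    have hkey := key l A B n
    have hS := S_nonneg l A B hl0 hl1 hB hA n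
    have h1 : 0 ≤ ((n:ℝ)+1) * janowskiCoeff l A B (n+1) := by
      have hb : 0 ≤ -((n:ℝ) * B * janowskiCoeff l A B n) := by
        have : (n:ℝ) * (-B) * janowskiCoeff l A B n ≥ 0 :=
          mul_nonneg (mul_nonneg (Nat.cast_nonneg n) (by linarith)) ih
        nlinarith
      nlinarith [mul_nonneg (by linarith : (0:ℝ) ≤ A - B) hS]
    nlinarith [h1]

theorem coeff_combination_nonneg (l A B : ℝ) (hl0 : 0 < l) (hl1 : l ≤ 1)
    (hB : -1 ≤ B) (hBA : B < A) (hA : A ≤ 0) (m n : ℕ) (hm : 1 ≤ m) (hn : 1 ≤ n) :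
    0 ≤ ((m : ℝ) + 1) * ((n : ℝ) + 1) * janowskiCoeff l A B (n + 1)
        + (m : ℝ) * (n : ℝ) * B * janowskiCoeff l A B n := by
  have hB0 : B ≤ 0 := by linarith
  have hkey := key l A B n
  have hS := S_nonneg l A B hl0 hl1 hB0 hA n
  have h1 : 0 ≤ ((n:ℝ)+1) * janowskiCoeff l A B (n+1) + (n:ℝ) * B * janowskiCoeff l A B n := by
    rw [hkey]
    exact mul_nonneg (by linarith) hS
  have h2 : 0 ≤ janowskiCoeff l A B (n+1) :=
    janowskiCoeff_nonneg l A B hl0 hl1 hB0 hA hBA.le (n+1)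
  have hm0 : (0:ℝ) ≤ (m:ℝ) := Nat.cast_nonneg m
  nlinarith [mul_nonneg hm0 h1, mul_nonneg (by positivity : (0:ℝ) ≤ (n:ℝ)+1) h2]
end

section
/- Let 0 < λ ≤ 1 and −1 ≤ B < A ≤ 0, and let a_n = a_n(A,B,λ) denote the Taylor coefficients of v_λ(A,B,z). Then for all n ∈ ℕ (n ≥ 1), (n+1) a_{n+1} + B n a_n > 0; equivalently, the analytic function (1+Bz) · d/dz [v_λ(A,B,z)] has strictly positive Taylor coefficients. -/
/-- Coefficient of `(1+Az)^l`. -/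
noncomputable def jF (l A : ℝ) (k : ℕ) : ℝ :=
  (descPochhammer ℝ k).eval l / (k.factorial : ℝ) * A ^ k

/-- Coefficient of `(1+Bz)^{-l}`. -/
noncomputable def jG (l B : ℝ) (j : ℕ) : ℝ :=
  (ascPochhammer ℝ j).eval l / (j.factorial : ℝ) * (-B) ^ j

lemma janowskiCoeff_eq (l A B : ℝ) (n : ℕ) :
    janowskiCoeff l A B n = ∑ k ∈ Finset.range (n + 1), jF l A k * jG l B (n - k) := by
  unfold janowskiCoeff jF jG
  refine Finset.sum_congr rfl fun k _ => by ring

lemma jF_rec (l A : ℝ) (k : ℕ) :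
    ((k : ℝ) + 1) * jF l A (k + 1) = A * (l - k) * jF l A k := by
  unfold jF
  rw [descPochhammer_succ_eval, Nat.factorial_succ, pow_succ]
  have hk : (k.factorial : ℝ) ≠ 0 := Nat.cast_ne_zero.2 k.factorial_ne_zero
  have hk1 : ((k : ℝ) + 1) ≠ 0 := by positivity
  push_cast
  field_simp

lemma jG_rec (l B : ℝ) (j : ℕ) :
    ((j : ℝ) + 1) * jG l B (j + 1) = (-B) * (l + j) * jG l B j := by
  unfold jG
  rw [ascPochhammer_succ_eval, Nat.factorial_succ, pow_succ]
  have hj : (j.factorial : ℝ) ≠ 0 := Nat.cast_ne_zero.2 j.factorial_ne_zero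
  have hj1 : ((j : ℝ) + 1) ≠ 0 := by positivity
  push_cast
  field_simp

lemma jG_pos {l B : ℝ} (hl : 0 < l) (hB : 0 < -B) (j : ℕ) : 0 < jG l B j := by
  unfold jG
  have h1 : 0 < (ascPochhammer ℝ j).eval l := ascPochhammer_pos j l hl
  have h2 : (0:ℝ) < j.factorial := by exact_mod_cast j.factorial_pos
  positivity

lemma jF_key_nonneg {l A : ℝ} (hl0 : 0 < l) (hl1 : l ≤ 1) (hA : A ≤ 0) (k : ℕ) :
    0 ≤ (l - k) * jF l A k := by
  induction k with
  | zero =>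
    simp [jF, descPochhammer]
    linarith
  | succ k ih =>
    have hF : jF l A (k + 1) ≤ 0 := by
      have hrec := jF_rec l A k
      have hk1 : (0:ℝ) < (k : ℝ) + 1 := by positivity
      nlinarith [mul_nonpos_of_nonpos_of_nonneg hA ih]
    have hlk : l - ((k : ℕ) + 1 : ℕ) ≤ 0 := by
      push_cast
      have hk0 : (0:ℝ) ≤ (k : ℝ) := Nat.cast_nonneg k
      linarith
    nlinarith

lemma key_identity (l A B : ℝ) (n : ℕ) :
    ((n : ℝ) + 1) * janowskiCoeff l A B (n + 1) + B * (n : ℝ) * janowskiCoeff l A B n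
      = (A - B) * ∑ k ∈ Finset.range (n + 1), (l - k) * (jF l A k * jG l B (n - k)) := by
  rw [janowskiCoeff_eq, janowskiCoeff_eq]
  have hsplit : ((n : ℝ) + 1) * ∑ k ∈ Finset.range (n + 1 + 1), jF l A k * jG l B (n + 1 - k)
      = (∑ k ∈ Finset.range (n + 2), (k : ℝ) * (jF l A k * jG l B (n + 1 - k)))
        + ∑ k ∈ Finset.range (n + 2), ((n + 1 - k : ℕ) : ℝ) * (jF l A k * jG l B (n + 1 - k)) := by
    rw [Finset.mul_sum, ← Finset.sum_add_distrib]
    refine Finset.sum_congr rfl fun k hk => ?_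
    have hk' : k ≤ n + 1 := by
      have := Finset.mem_range.mp hk; omega
    rw [Nat.cast_sub hk']
    push_cast
    ring
  have h1 : (∑ k ∈ Finset.range (n + 2), (k : ℝ) * (jF l A k * jG l B (n + 1 - k)))
      = ∑ k ∈ Finset.range (n + 1), A * (l - k) * (jF l A k * jG l B (n - k)) := by
    rw [Finset.sum_range_succ']
    simp only [Nat.cast_zero, zero_mul, add_zero]
    refine Finset.sum_congr rfl fun k hk => ?_
    have hsub : n + 1 - (k + 1) = n - k := by omega
    rw [hsub]
    calc ((k + 1 : ℕ) : ℝ) * (jF l A (k + 1) * jG l B (n - k))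
        = (((k : ℝ) + 1) * jF l A (k + 1)) * jG l B (n - k) := by push_cast; ring
      _ = (A * (l - k) * jF l A k) * jG l B (n - k) := by rw [jF_rec]
      _ = A * (l - k) * (jF l A k * jG l B (n - k)) := by ring
  have h2 : (∑ k ∈ Finset.range (n + 2), ((n + 1 - k : ℕ) : ℝ) * (jF l A k * jG l B (n + 1 - k)))
      = ∑ k ∈ Finset.range (n + 1), (-B) * (l + ((n - k : ℕ) : ℝ)) * (jF l A k * jG l B (n - k)) := by
    rw [Finset.sum_range_succ]
    simp only [Nat.sub_self, Nat.cast_zero, zero_mul, add_zero]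
    refine Finset.sum_congr rfl fun k hk => ?_
    have hk' : k ≤ n := by
      have := Finset.mem_range.mp hk; omega
    have hsub : n + 1 - k = (n - k) + 1 := by omega
    rw [hsub]
    calc (((n - k) + 1 : ℕ) : ℝ) * (jF l A k * jG l B ((n - k) + 1))
        = jF l A k * ((((n - k : ℕ) : ℝ) + 1) * jG l B ((n - k) + 1)) := by push_cast; ring
      _ = jF l A k * ((-B) * (l + ((n - k : ℕ) : ℝ)) * jG l B (n - k)) := by rw [jG_rec]
      _ = (-B) * (l + ((n - k : ℕ) : ℝ)) * (jF l A k * jG l B (n - k)) := by ring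
  rw [hsplit, h1, h2, Finset.mul_sum, Finset.mul_sum, ← Finset.sum_add_distrib,
    ← Finset.sum_add_distrib]
  refine Finset.sum_congr rfl fun k hk => ?_
  have hk' : k ≤ n := by
    have := Finset.mem_range.mp hk; omega
  rw [Nat.cast_sub hk']
  ring

theorem succ_coeff_combination_pos (l A B : ℝ) (hl0 : 0 < l) (hl1 : l ≤ 1)
    (hB : -1 ≤ B) (hBA : B < A) (hA : A ≤ 0) (n : ℕ) (hn : 1 ≤ n) :
    0 < ((n : ℝ) + 1) * janowskiCoeff l A B (n + 1) + B * (n : ℝ) * janowskiCoeff l A B n := by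
  rw [key_identity]
  have hBneg : 0 < -B := by linarith
  have hAB : 0 < A - B := by linarith
  refine mul_pos hAB ?_
  have h0 : 0 ∈ Finset.range (n + 1) := Finset.mem_range.mpr (by omega)
  refine Finset.sum_pos' (fun k _ => ?_) ⟨0, h0, ?_⟩
  · have h1 : 0 ≤ (l - k) * jF l A k := jF_key_nonneg hl0 hl1 hA k
    have h2 : 0 < jG l B (n - k) := jG_pos hl0 hBneg (n - k)
    calc (0:ℝ) ≤ ((l - k) * jF l A k) * jG l B (n - k) := mul_nonneg h1 h2.le
      _ = (l - k) * (jF l A k * jG l B (n - k)) := by ring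
  · have h2 : 0 < jG l B (n - 0) := jG_pos hl0 hBneg (n - 0)
    have hF0 : jF l A 0 = 1 := by simp [jF, descPochhammer]
    simp only [Nat.cast_zero, sub_zero, hF0, one_mul]
    exact mul_pos hl0 h2
end

section
/- Let 0 < λ ≤ 1 and 0 ≤ α < β. Then for every n ∈ ℕ, β^n · Σ_{k=0}^{n} ([λ]_k / k!) · ((λ)_{n−k} / (n−k)!) · (−1)^k · (α/β)^k ≥ 0. -/
open Polynomial Finset

lemma smeval_int_real (p : Polynomial ℤ) (x : ℝ) :
    p.smeval x = (p.map (Int.castRingHom ℝ)).eval x := by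
  rw [eval_map, ← eval₂_smulOneHom_eq_smeval]
  congr 1
  ext n
  simp [RingHom.smulOneHom]

lemma descVdm (a b : ℝ) (n : ℕ) :
    (descPochhammer ℝ n).eval (a + b) = ∑ k ∈ Finset.range (n + 1),
      (n.choose k : ℝ) * ((descPochhammer ℝ k).eval a * (descPochhammer ℝ (n - k)).eval b) := by
  have h := Ring.descPochhammer_smeval_add (R := ℝ) (r := a) (s := b) n (Commute.all a b)
  simp only [smeval_int_real, descPochhammer_map] at h
  rw [Finset.Nat.sum_antidiagonal_eq_sum_range_succ_mk] at h
  simpa using h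

lemma desc_neg (l : ℝ) (k : ℕ) :
    (descPochhammer ℝ k).eval (-l) = (-1:ℝ)^k * (ascPochhammer ℝ k).eval l := by
  have h := ascPochhammer_eval_neg_eq_descPochhammer (R := ℝ) (-l) k
  rw [neg_neg] at h
  have : (-1:ℝ)^k * (-1:ℝ)^k = 1 := by
    rw [← pow_add]; simp [pow_add, pow_mul, ← two_mul]
  calc (descPochhammer ℝ k).eval (-l)
      = (-1:ℝ)^k * (-1:ℝ)^k * (descPochhammer ℝ k).eval (-l) := by rw [this, one_mul]
    _ = (-1:ℝ)^k * (ascPochhammer ℝ k).eval l := by rw [mul_assoc, ← h]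

lemma key_id (l : ℝ) {n : ℕ} (hn : 1 ≤ n) :
    ∑ k ∈ Finset.range (n + 1),
      ((descPochhammer ℝ k).eval l / (k.factorial : ℝ)) *
        ((ascPochhammer ℝ (n - k)).eval l / ((n - k).factorial : ℝ)) * (-1:ℝ) ^ k = 0 := by
  have h := descVdm l (-l) n
  rw [add_neg_cancel, descPochhammer_eval_zero, if_neg (by omega)] at h
  calc ∑ k ∈ Finset.range (n + 1),
      ((descPochhammer ℝ k).eval l / (k.factorial : ℝ)) *
        ((ascPochhammer ℝ (n - k)).eval l / ((n - k).factorial : ℝ)) * (-1:ℝ) ^ k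
      = ∑ k ∈ Finset.range (n + 1),
        ((n.choose k : ℝ) * ((descPochhammer ℝ k).eval l * (descPochhammer ℝ (n - k)).eval (-l)))
          * ((-1:ℝ)^n / (n.factorial : ℝ)) := by
        apply Finset.sum_congr rfl
        intro k hk
        have hkn : k ≤ n := Nat.lt_succ_iff.mp (Finset.mem_range.mp hk)
        have hfac : ((n.choose k : ℝ) * k.factorial * (n-k).factorial) = (n.factorial : ℝ) := by
          exact_mod_cast congrArg (Nat.cast : ℕ → ℝ)
            (Nat.choose_mul_factorial_mul_factorial hkn)
        have hpow : (-1:ℝ)^(n-k) * (-1:ℝ)^n = (-1:ℝ)^k := by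
          rw [← pow_add]
          have : n - k + n = 2*(n-k) + k := by omega
          rw [this, pow_add, pow_mul]; simp
        have hk0 : (k.factorial : ℝ) ≠ 0 := Nat.cast_ne_zero.mpr k.factorial_ne_zero
        have hnk0 : ((n-k).factorial : ℝ) ≠ 0 := Nat.cast_ne_zero.mpr (n-k).factorial_ne_zero
        have hn0 : (n.factorial : ℝ) ≠ 0 := Nat.cast_ne_zero.mpr n.factorial_ne_zero
        rw [desc_neg]
        field_simp
        rw [← hfac]
        linear_combination (-(descPochhammer ℝ k).eval l * (ascPochhammer ℝ (n-k)).eval l *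
          (n.choose k : ℝ) * k.factorial * (n-k).factorial) * hpow
    _ = 0 := by rw [← Finset.sum_mul, ← h, zero_mul]

lemma asc_neg_nonpos (l : ℝ) (hl0 : 0 < l) (hl1 : l ≤ 1) :
    ∀ k, 1 ≤ k → (ascPochhammer ℝ k).eval (-l) ≤ 0 := by
  intro k
  induction k with
  | zero => omega
  | succ k ih =>
    intro _
    rcases Nat.eq_zero_or_pos k with hk | hk
    · subst hk; simp [ascPochhammer_one]; linarith
    · rw [ascPochhammer_succ_right, eval_mul, eval_add, eval_X, eval_natCast]
      have h1 : (-l + k : ℝ) ≥ 0 := by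
        have : (1:ℝ) ≤ k := by exact_mod_cast hk
        linarith
      exact mul_nonpos_of_nonpos_of_nonneg (ih hk) h1

theorem scaled_alternating_pochhammer_sum_nonneg (l α β : ℝ) (hl0 : 0 < l) (hl1 : l ≤ 1)
    (hα : 0 ≤ α) (hαβ : α < β) (n : ℕ) :
    0 ≤ β ^ n * ∑ k ∈ Finset.range (n + 1),
      ((descPochhammer ℝ k).eval l / (k.factorial : ℝ)) *
        ((ascPochhammer ℝ (n - k)).eval l / ((n - k).factorial : ℝ)) *
        (-1 : ℝ) ^ k * (α / β) ^ k := by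
  have hβ : 0 < β := lt_of_le_of_lt hα hαβ
  apply mul_nonneg (pow_nonneg hβ.le n)
  set x := α / β with hxdef
  have hx0 : 0 ≤ x := div_nonneg hα hβ.le
  have hx1 : x ≤ 1 := by
    rw [hxdef, div_le_one hβ]; exact hαβ.le
  rcases Nat.eq_zero_or_pos n with hn | hn
  · subst hn
    simp
  · have h0 := key_id l hn
    have step : ∀ k ∈ Finset.range (n + 1),
        ((descPochhammer ℝ k).eval l / (k.factorial : ℝ)) *
          ((ascPochhammer ℝ (n - k)).eval l / ((n - k).factorial : ℝ)) * (-1:ℝ) ^ k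
        ≤ ((descPochhammer ℝ k).eval l / (k.factorial : ℝ)) *
          ((ascPochhammer ℝ (n - k)).eval l / ((n - k).factorial : ℝ)) * (-1:ℝ) ^ k * x ^ k := by
      intro k hk
      rcases Nat.eq_zero_or_pos k with hk0 | hk0
      · subst hk0; simp
      · set t := ((descPochhammer ℝ k).eval l / (k.factorial : ℝ)) *
          ((ascPochhammer ℝ (n - k)).eval l / ((n - k).factorial : ℝ)) * (-1:ℝ) ^ k with ht
        have htle : t ≤ 0 := by
          have hA : 0 ≤ (ascPochhammer ℝ (n - k)).eval l := (ascPochhammer_pos _ l hl0).le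
          have hD : (-1:ℝ)^k * (descPochhammer ℝ k).eval l ≤ 0 := by
            rw [← ascPochhammer_eval_neg_eq_descPochhammer]
            exact asc_neg_nonpos l hl0 hl1 k hk0
          have hk0' : (0:ℝ) < k.factorial := by exact_mod_cast k.factorial_pos
          have hnk0' : (0:ℝ) < (n-k).factorial := by exact_mod_cast (n-k).factorial_pos
          have : t = ((-1:ℝ)^k * (descPochhammer ℝ k).eval l) *
              ((ascPochhammer ℝ (n - k)).eval l / ((n - k).factorial : ℝ)) / (k.factorial : ℝ) := by
            rw [ht]; ring
          rw [this]
          apply div_nonpos_of_nonpos_of_nonneg _ hk0'.le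
          exact mul_nonpos_of_nonpos_of_nonneg hD (div_nonneg hA hnk0'.le)
        have hxk : x ^ k ≤ 1 := pow_le_one₀ hx0 hx1
        calc t = t * 1 := (mul_one t).symm
          _ ≤ t * x ^ k := mul_le_mul_of_nonpos_left hxk htle
    calc (0:ℝ) = ∑ k ∈ Finset.range (n + 1),
        ((descPochhammer ℝ k).eval l / (k.factorial : ℝ)) *
          ((ascPochhammer ℝ (n - k)).eval l / ((n - k).factorial : ℝ)) * (-1:ℝ) ^ k := h0.symm
      _ ≤ _ := Finset.sum_le_sum step
end

section
/- For λ ∈ (0,1] and −1 ≤ B < 0, the function v_λ(0,B,z) = (1+Bz)^{−λ} is stable (i.e., stable with respect to itself): for every n ∈ ℕ, s_n((1+B·)^{−λ})(z) · (1+Bz)^{λ} ≺ (1+Bz)^{λ} on the open unit disk 𝔻. -/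
/-- The `n`-th partial sum `s_n(f)(z) = ∑_{k=0}^n a_k z^k` of the Taylor expansion of `f`
about `0`, where `a_k = f^{(k)}(0)/k!`. -/
noncomputable def partialSum (f : ℂ → ℂ) (n : ℕ) (z : ℂ) : ℂ :=
  ∑ k ∈ Finset.range (n + 1), (iteratedDeriv k f 0 / (k.factorial : ℂ)) * z ^ k

/-- `f` is subordinate to `g` on the open unit disk: there is an analytic
`ω : 𝔻 → 𝔻` with `ω 0 = 0` and `f = g ∘ ω` on `𝔻`. -/
def IsSubordinate (f g : ℂ → ℂ) : Prop :=
  ∃ ω : ℂ → ℂ, DifferentiableOn ℂ ω (Metric.ball 0 1) ∧ ω 0 = 0 ∧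
    (∀ z ∈ Metric.ball (0 : ℂ) 1, ω z ∈ Metric.ball (0 : ℂ) 1) ∧
    ∀ z ∈ Metric.ball (0 : ℂ) 1, f z = g (ω z)


open Complex Finset

namespace V0

noncomputable def aa (l : ℝ) (k : ℕ) : ℝ := ∏ j ∈ Finset.range k, (l + j) / (j + 1)

lemma aa_zero (l : ℝ) : aa l 0 = 1 := by simp [aa]

lemma aa_succ (l : ℝ) (k : ℕ) : aa l (k+1) = aa l k * ((l + k) / (k + 1)) := by
  rw [aa, aa, Finset.prod_range_succ]

lemma aa_pos {l : ℝ} (hl : 0 < l) (k : ℕ) : 0 < aa l k :=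
  Finset.prod_pos fun j _ => div_pos (by positivity) (by positivity)

lemma aa_rec (l : ℝ) (k : ℕ) : ((k:ℝ)+1) * aa l (k+1) = (l + k) * aa l k := by
  rw [aa_succ]
  have : ((k:ℝ)+1) ≠ 0 := by positivity
  field_simp

lemma aa_antitone {l : ℝ} (hl0 : 0 < l) (hl1 : l ≤ 1) (k : ℕ) : aa l (k+1) ≤ aa l k := by
  rw [aa_succ]
  have h1 : (l + k)/(k+1) ≤ 1 := by
    rw [div_le_one (by positivity)]
    push_cast
    linarith
  nlinarith [aa_pos hl0 k]

section generic
variable {K : Type*} [Field K] (φ : ℝ →+* K)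

lemma aa_recK (l : ℝ) (k : ℕ) : ((k:K)+1) * φ (aa l (k+1)) = (φ l + k) * φ (aa l k) := by
  have h := congrArg φ (aa_rec l k)
  rw [map_mul, map_mul, map_add, map_add, map_natCast, map_one] at h
  simpa using h

lemma sum_ident1 (l : ℝ) (n : ℕ) (x : K) :
    (1 - x) * ∑ k ∈ range (n+1), φ (aa l k) * x ^ k
      = 1 - ((∑ k ∈ range (n+1), φ (aa l k - aa l (k+1)) * x ^ (k+1))
          + φ (aa l (n+1)) * x ^ (n+1)) := by
  have h1 : ∑ k ∈ range (n+1), φ (aa l (k+1)) * x ^ (k+1)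
      = (∑ k ∈ range (n+1), φ (aa l k) * x ^ k) + φ (aa l (n+1)) * x ^ (n+1) - 1 := by
    have h2 : ∑ k ∈ range (n+2), φ (aa l k) * x ^ k
        = (∑ k ∈ range (n+1), φ (aa l (k+1)) * x ^ (k+1)) + φ (aa l 0) * x ^ 0 :=
      Finset.sum_range_succ' _ _
    rw [Finset.sum_range_succ] at h2
    rw [aa_zero] at h2
    simp only [map_one, pow_zero, mul_one] at h2
    linear_combination -h2
  have h3 : ∀ k, φ (aa l k - aa l (k+1)) * x ^ (k+1)
      = φ (aa l k) * x ^ (k+1) - φ (aa l (k+1)) * x ^ (k+1) := by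
    intro k; rw [map_sub, sub_mul]
  rw [Finset.sum_congr rfl fun k _ => h3 k, Finset.sum_sub_distrib, h1]
  have h4 : ∑ k ∈ range (n+1), φ (aa l k) * x ^ (k+1)
      = x * ∑ k ∈ range (n+1), φ (aa l k) * x ^ k := by
    rw [Finset.mul_sum]
    refine Finset.sum_congr rfl fun k _ => by ring
  rw [h4]
  ring

lemma sum_ident2 (l : ℝ) (n : ℕ) (x : K) :
    (1 - x) * ∑ k ∈ range (n+1), φ (aa l k) * ((k:K) * x ^ (k-1))
      = φ l * (∑ k ∈ range (n+1), φ (aa l k) * x ^ k)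
        - (φ l + n) * φ (aa l n) * x ^ n := by
  have hD : ∑ k ∈ range (n+1), φ (aa l k) * ((k:K) * x ^ (k-1))
      = ∑ k ∈ range n, (φ l + k) * φ (aa l k) * x ^ k := by
    rw [Finset.sum_range_succ' (fun k => φ (aa l k) * ((k:K) * x ^ (k-1))) n]
    simp only [Nat.cast_zero, zero_mul, mul_zero, add_zero, Nat.add_sub_cancel]
    refine Finset.sum_congr rfl fun k _ => ?_
    have := aa_recK φ l k
    push_cast
    linear_combination x ^ k * this
  have hxD : ∑ k ∈ range (n+1), (k:K) * φ (aa l k) * x ^ k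
      = x * ∑ k ∈ range n, (φ l + k) * φ (aa l k) * x ^ k := by
    rw [Finset.sum_range_succ' (fun k => (k:K) * φ (aa l k) * x ^ k) n]
    simp only [Nat.cast_zero, zero_mul, add_zero, Finset.mul_sum]
    refine Finset.sum_congr rfl fun k _ => ?_
    have := aa_recK φ l k
    push_cast
    linear_combination x ^ (k+1) * this
  have hext : ∑ k ∈ range (n+1), (φ l + k) * φ (aa l k) * x ^ k
      = (∑ k ∈ range n, (φ l + k) * φ (aa l k) * x ^ k) + (φ l + n) * φ (aa l n) * x ^ n :=
    Finset.sum_range_succ _ _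
  have hsplit : ∑ k ∈ range (n+1), (φ l + k) * φ (aa l k) * x ^ k
      = φ l * (∑ k ∈ range (n+1), φ (aa l k) * x ^ k)
        + ∑ k ∈ range (n+1), (k:K) * φ (aa l k) * x ^ k := by
    rw [Finset.mul_sum, ← Finset.sum_add_distrib]
    refine Finset.sum_congr rfl fun k _ => by ring
  rw [sub_mul, one_mul, hD, ← hxD]
  linear_combination hsplit - hext

end generic


noncomputable def PP (l : ℝ) (n : ℕ) (z : ℂ) : ℂ :=
  ∑ k ∈ Finset.range (n+1), (aa l k : ℂ) * z ^ k

noncomputable def PPd (l : ℝ) (n : ℕ) (z : ℂ) : ℂ :=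
  ∑ k ∈ Finset.range (n+1), (aa l k : ℂ) * ((k:ℂ) * z ^ (k-1))

noncomputable def Pr (l : ℝ) (n : ℕ) (t : ℝ) : ℝ :=
  ∑ k ∈ Finset.range (n+1), aa l k * t ^ k

noncomputable def Prd (l : ℝ) (n : ℕ) (t : ℝ) : ℝ :=
  ∑ k ∈ Finset.range (n+1), aa l k * ((t:ℝ) ^ (k-1) * k)

lemma algebraMap_eq_coe (r : ℝ) : (algebraMap ℝ ℂ) r = (r : ℂ) := rfl

lemma PP_zero (l : ℝ) (n : ℕ) : PP l n 0 = 1 := by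
  rw [PP, Finset.sum_eq_single 0]
  · simp [aa_zero]
  · intro k _ hk
    simp [zero_pow hk]
  · simp

lemma Pr_zero (l : ℝ) (n : ℕ) : Pr l n 0 = 1 := by
  rw [Pr, Finset.sum_eq_single 0]
  · simp [aa_zero]
  · intro k _ hk
    simp [zero_pow hk]
  · simp

lemma hasDerivAt_PP (l : ℝ) (n : ℕ) (z : ℂ) : HasDerivAt (PP l n) (PPd l n z) z := by
  have : ∀ k ∈ Finset.range (n+1), HasDerivAt (fun z : ℂ => (aa l k : ℂ) * z ^ k)
      ((aa l k : ℂ) * ((k:ℂ) * z ^ (k-1))) z := fun k _ => (hasDerivAt_pow k z).const_mul _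
  exact HasDerivAt.fun_sum this

lemma hasDerivAt_Pr (l : ℝ) (n : ℕ) (t : ℝ) : HasDerivAt (Pr l n) (Prd l n t) t := by
  have : ∀ k ∈ Finset.range (n+1), HasDerivAt (fun t : ℝ => aa l k * t ^ k)
      (aa l k * ((k:ℝ) * t ^ (k-1))) t := fun k _ => (hasDerivAt_pow k t).const_mul _
  have h := HasDerivAt.fun_sum this
  have he : Prd l n t = ∑ k ∈ Finset.range (n+1), aa l k * ((k:ℝ) * t ^ (k-1)) := by
    simp only [Prd]; exact Finset.sum_congr rfl fun k _ => by ring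
  rw [he]
  exact h

lemma ident1C (l : ℝ) (n : ℕ) (z : ℂ) :
    (1 - z) * PP l n z
      = 1 - ((∑ k ∈ Finset.range (n+1), ((aa l k - aa l (k+1) : ℝ) : ℂ) * z ^ (k+1))
          + ((aa l (n+1) : ℝ) : ℂ) * z ^ (n+1)) := by
  have := sum_ident1 (algebraMap ℝ ℂ) l n z
  simpa [algebraMap_eq_coe, PP] using this

lemma ident2C (l : ℝ) (n : ℕ) (z : ℂ) :
    (1 - z) * PPd l n z = (l:ℂ) * PP l n z - ((l:ℂ) + n) * (aa l n : ℂ) * z ^ n := by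
  have := sum_ident2 (algebraMap ℝ ℂ) l n z
  simpa [algebraMap_eq_coe, PP, PPd] using this

lemma ident2R (l : ℝ) (n : ℕ) (t : ℝ) :
    (1 - t) * Prd l n t = l * Pr l n t - (l + n) * aa l n * t ^ n := by
  have := sum_ident2 (RingHom.id ℝ) l n t
  simp only [RingHom.id_apply] at this
  simp only [Pr, Prd]
  rw [← this]
  congr 1
  exact Finset.sum_congr rfl fun k _ => by ring

lemma norm_one_sub_mul_PP_le {l : ℝ} (hl0 : 0 < l) (hl1 : l ≤ 1) (n : ℕ) {z : ℂ}
    (hz : ‖z‖ ≤ 1) : ‖(1 - z) * PP l n z - 1‖ ≤ ‖z‖ := by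
  rw [ident1C]
  rw [show (1:ℂ) - ((∑ k ∈ Finset.range (n+1), ((aa l k - aa l (k+1) : ℝ) : ℂ) * z ^ (k+1))
          + ((aa l (n+1) : ℝ) : ℂ) * z ^ (n+1)) - 1
      = -((∑ k ∈ Finset.range (n+1), ((aa l k - aa l (k+1) : ℝ) : ℂ) * z ^ (k+1))
          + ((aa l (n+1) : ℝ) : ℂ) * z ^ (n+1)) by ring]
  rw [norm_neg]
  have hzk : ∀ k : ℕ, ‖z ^ (k+1)‖ ≤ ‖z‖ := by
    intro k
    rw [norm_pow]
    calc ‖z‖ ^ (k+1) ≤ ‖z‖ ^ 1 := pow_le_pow_of_le_one (norm_nonneg z) hz (by omega)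
    _ = ‖z‖ := pow_one _
  have h1 : ‖∑ k ∈ Finset.range (n+1), ((aa l k - aa l (k+1) : ℝ) : ℂ) * z ^ (k+1)‖
      ≤ ∑ k ∈ Finset.range (n+1), (aa l k - aa l (k+1)) * ‖z‖ := by
    refine (norm_sum_le _ _).trans (Finset.sum_le_sum fun k _ => ?_)
    rw [norm_mul, Complex.norm_real, Real.norm_eq_abs,
      _root_.abs_of_nonneg (sub_nonneg.mpr (aa_antitone hl0 hl1 k))]
    exact mul_le_mul_of_nonneg_left (hzk k) (sub_nonneg.mpr (aa_antitone hl0 hl1 k))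
  have h2 : ‖((aa l (n+1) : ℝ) : ℂ) * z ^ (n+1)‖ ≤ aa l (n+1) * ‖z‖ := by
    rw [norm_mul, Complex.norm_real, Real.norm_eq_abs, _root_.abs_of_nonneg (aa_pos hl0 (n+1)).le]
    exact mul_le_mul_of_nonneg_left (hzk n) (aa_pos hl0 (n+1)).le
  have h3 : ∑ k ∈ Finset.range (n+1), (aa l k - aa l (k+1)) * ‖z‖
      = (1 - aa l (n+1)) * ‖z‖ := by
    rw [← Finset.sum_mul, Finset.sum_range_sub' (fun k => aa l k), aa_zero]
  calc ‖_ + _‖ ≤ _ + _ := norm_add_le _ _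
  _ ≤ (∑ k ∈ Finset.range (n+1), (aa l k - aa l (k+1)) * ‖z‖) + aa l (n+1) * ‖z‖ :=
      add_le_add h1 h2
  _ = ‖z‖ := by rw [h3]; ring

lemma rePos_of_close {w : ℂ} (h : ‖w - 1‖ < 1) : 0 < w.re := by
  have h1 : |(w - 1).re| ≤ ‖w - 1‖ := Complex.abs_re_le_norm (w - 1)
  have h2 : (w - 1).re = w.re - 1 := by simp
  rw [h2] at h1
  cases abs_le.mp h1 with
  | intro hl hr => linarith

lemma slit_div {u v : ℂ} (hu : 0 < u.re) (hv : 0 < v.re) : u / v ∈ Complex.slitPlane := by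
  rw [Complex.mem_slitPlane_iff]
  by_contra hcon
  push_neg at hcon
  obtain ⟨h1, h2⟩ := hcon
  have hv0 : v ≠ 0 := fun h => by simp [h] at hv
  have heq : u = u / v * v := (div_mul_cancel₀ u hv0).symm
  have hre : u.re = (u / v).re * v.re - (u / v).im * v.im := by
    conv_lhs => rw [heq]
    exact Complex.mul_re _ _
  rw [h2] at hre
  simp only [zero_mul, sub_zero] at hre
  nlinarith

lemma rePos_one_sub {z : ℂ} (hz : ‖z‖ < 1) : 0 < (1 - z).re := by
  apply rePos_of_close
  simpa using hz

lemma one_sub_ne_zero {z : ℂ} (hz : ‖z‖ < 1) : (1 : ℂ) - z ≠ 0 := by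
  intro h
  have := rePos_one_sub hz
  rw [h] at this
  simp at this

lemma rePos_mul {l : ℝ} (hl0 : 0 < l) (hl1 : l ≤ 1) (n : ℕ) {z : ℂ} (hz : ‖z‖ < 1) :
    0 < ((1 - z) * PP l n z).re :=
  rePos_of_close ((norm_one_sub_mul_PP_le hl0 hl1 n hz.le).trans_lt hz)

lemma PP_slit {l : ℝ} (hl0 : 0 < l) (hl1 : l ≤ 1) (n : ℕ) {z : ℂ} (hz : ‖z‖ < 1) :
    PP l n z ∈ Complex.slitPlane := by
  have heq : PP l n z = ((1 - z) * PP l n z) / (1 - z) := by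
    rw [eq_div_iff (one_sub_ne_zero hz)]
    ring
  rw [heq]
  exact slit_div (rePos_mul hl0 hl1 n hz) (rePos_one_sub hz)

lemma PP_ne_zero {l : ℝ} (hl0 : 0 < l) (hl1 : l ≤ 1) (n : ℕ) {z : ℂ} (hz : ‖z‖ < 1) :
    PP l n z ≠ 0 :=
  Complex.slitPlane_ne_zero (PP_slit hl0 hl1 n hz)


noncomputable def HH (l : ℝ) (n : ℕ) (z : ℂ) : ℂ := PP l n z ^ (l:ℂ)⁻¹ * (1 - z)

noncomputable def cc (l : ℝ) (n : ℕ) : ℝ := (l + n) * aa l n / l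

lemma cc_nonneg {l : ℝ} (hl0 : 0 < l) (n : ℕ) : 0 ≤ cc l n := by
  have := aa_pos hl0 n
  have : 0 < (l + n) * aa l n / l := by positivity
  rw [cc]; linarith

lemma HH_zero (l : ℝ) (n : ℕ) : HH l n 0 = 1 := by
  simp [HH, PP_zero]

lemma hasDerivAt_HH {l : ℝ} (hl0 : 0 < l) (hl1 : l ≤ 1) (n : ℕ) {z : ℂ} (hz : ‖z‖ < 1) :
    HasDerivAt (HH l n) (-((cc l n : ℂ) * z ^ n * PP l n z ^ ((l:ℂ)⁻¹ - 1))) z := by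
  have hslit := PP_slit hl0 hl1 n hz
  have hP0 := PP_ne_zero hl0 hl1 n hz
  have hd1 : HasDerivAt (fun w => PP l n w ^ (l:ℂ)⁻¹)
      ((l:ℂ)⁻¹ * PP l n z ^ ((l:ℂ)⁻¹ - 1) * PPd l n z) z :=
    (hasDerivAt_PP l n z).cpow_const hslit
  have hd2 : HasDerivAt (fun w : ℂ => 1 - w) (-1) z := by
    simpa using (hasDerivAt_id z).const_sub 1
  have hd := hd1.mul hd2
  refine hd.congr_deriv (Eq.symm ?_)
  have hsplit : PP l n z ^ (l:ℂ)⁻¹ = PP l n z ^ ((l:ℂ)⁻¹ - 1) * PP l n z := by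
    conv_lhs => rw [show (l:ℂ)⁻¹ = ((l:ℂ)⁻¹ - 1) + 1 by ring]
    rw [Complex.cpow_add _ _ hP0, Complex.cpow_one]
  have hid := ident2C l n z
  have hlC : (l:ℂ) ≠ 0 := by
    exact_mod_cast ne_of_gt hl0
  have hcc : (cc l n : ℂ) * (l:ℂ) = ((l:ℂ) + n) * (aa l n : ℂ) := by
    rw [cc]
    push_cast
    field_simp
  rw [hsplit]
  have hinv : (l:ℂ)⁻¹ * (l:ℂ) = 1 := inv_mul_cancel₀ hlC
  linear_combination (-(l:ℂ)⁻¹ * (PP l n z ^ ((l:ℂ)⁻¹ - 1))) * hid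
    + (-(l:ℂ)⁻¹ * (PP l n z ^ ((l:ℂ)⁻¹ - 1)) * z ^ n) * hcc
    + (-((PP l n z ^ ((l:ℂ)⁻¹ - 1)) * PP l n z
        - (cc l n : ℂ) * z ^ n * (PP l n z ^ ((l:ℂ)⁻¹ - 1)))) * hinv

lemma Pr_ge_one {l : ℝ} (hl0 : 0 < l) (n : ℕ) {t : ℝ} (ht : 0 ≤ t) : 1 ≤ Pr l n t := by
  have h0 : ∀ k ∈ Finset.range (n+1), 0 ≤ aa l k * t ^ k :=
    fun k _ => mul_nonneg (aa_pos hl0 k).le (pow_nonneg ht k)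
  have h1 : aa l 0 * t ^ 0 ≤ Pr l n t :=
    Finset.single_le_sum h0 (Finset.mem_range.mpr (by omega))
  simpa [aa_zero] using h1

lemma Pr_pos {l : ℝ} (hl0 : 0 < l) (n : ℕ) {t : ℝ} (ht : 0 ≤ t) : 0 < Pr l n t :=
  lt_of_lt_of_le one_pos (Pr_ge_one hl0 n ht)

lemma hasDerivAt_psi {l : ℝ} (hl0 : 0 < l) (n : ℕ) {t : ℝ} (ht : 0 ≤ t) :
    HasDerivAt (fun t => Pr l n t ^ (l⁻¹:ℝ) * (1 - t))
      (-(cc l n * t ^ n * Pr l n t ^ (l⁻¹ - 1 : ℝ))) t := by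
  have hpos : 0 < Pr l n t := Pr_pos hl0 n ht
  have hd1 : HasDerivAt (fun t => Pr l n t ^ (l⁻¹:ℝ))
      (Prd l n t * l⁻¹ * Pr l n t ^ (l⁻¹ - 1 : ℝ)) t :=
    (hasDerivAt_Pr l n t).rpow_const (Or.inl hpos.ne')
  have hd2 : HasDerivAt (fun t : ℝ => 1 - t) (-1) t := by
    simpa using (hasDerivAt_id t).const_sub 1
  have hd := hd1.mul hd2
  refine hd.congr_deriv (Eq.symm ?_)
  have hsplit : Pr l n t ^ (l⁻¹:ℝ) = Pr l n t ^ (l⁻¹ - 1 : ℝ) * Pr l n t := by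
    conv_lhs => rw [show (l⁻¹:ℝ) = (l⁻¹ - 1) + 1 by ring]
    rw [Real.rpow_add hpos, Real.rpow_one]
  have hid := ident2R l n t
  have hcc : cc l n * l = (l + n) * aa l n := by
    rw [cc]; field_simp
  have hinv : l⁻¹ * l = 1 := inv_mul_cancel₀ (ne_of_gt hl0)
  rw [hsplit]
  linear_combination (-l⁻¹ * (Pr l n t ^ (l⁻¹ - 1 : ℝ))) * hid
    + (-l⁻¹ * (Pr l n t ^ (l⁻¹ - 1 : ℝ)) * t ^ n) * hcc
    + (-((Pr l n t ^ (l⁻¹ - 1 : ℝ)) * Pr l n t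
        - cc l n * t ^ n * (Pr l n t ^ (l⁻¹ - 1 : ℝ)))) * hinv

lemma continuous_Pr (l : ℝ) (n : ℕ) : Continuous (Pr l n) :=
  continuous_finset_sum _ fun k _ => continuous_const.mul (continuous_pow k)

lemma continuous_PP (l : ℝ) (n : ℕ) : Continuous (PP l n) :=
  continuous_finset_sum _ fun k _ => continuous_const.mul (continuous_pow k)

lemma contOn_integrand {l : ℝ} (hl0 : 0 < l) (n : ℕ) :
    ContinuousOn (fun t : ℝ => cc l n * t ^ n * Pr l n t ^ (l⁻¹ - 1 : ℝ)) (Set.uIcc 0 1) := by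
  intro t ht
  rw [Set.uIcc_of_le zero_le_one] at ht
  have hpos : Pr l n t ≠ 0 := (Pr_pos hl0 n ht.1).ne'
  have h1 : ContinuousAt (fun t : ℝ => Pr l n t ^ (l⁻¹ - 1 : ℝ)) t :=
    (Real.continuousAt_rpow_const _ _ (Or.inl hpos)).comp (continuous_Pr l n).continuousAt
  exact (((continuous_const.mul (continuous_pow n)).continuousAt).mul h1).continuousWithinAt

lemma integral_eq_one {l : ℝ} (hl0 : 0 < l) (n : ℕ) :
    ∫ t in (0:ℝ)..1, cc l n * t ^ n * Pr l n t ^ (l⁻¹ - 1 : ℝ) = 1 := by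
  have hderiv : ∀ t ∈ Set.uIcc (0:ℝ) 1,
      HasDerivAt (fun t => Pr l n t ^ (l⁻¹:ℝ) * (1 - t))
        (-(cc l n * t ^ n * Pr l n t ^ (l⁻¹ - 1 : ℝ))) t := by
    intro t ht
    rw [Set.uIcc_of_le zero_le_one] at ht
    exact hasDerivAt_psi hl0 n ht.1
  have hint : IntervalIntegrable (fun t : ℝ => -(cc l n * t ^ n * Pr l n t ^ (l⁻¹ - 1 : ℝ)))
      MeasureTheory.volume 0 1 := ((contOn_integrand hl0 n).neg).intervalIntegrable
  have h := intervalIntegral.integral_eq_sub_of_hasDerivAt hderiv hint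
  rw [intervalIntegral.integral_neg] at h
  have h1 : Pr l n 1 ^ (l⁻¹:ℝ) * (1 - 1) = 0 := by ring
  have h0 : Pr l n 0 ^ (l⁻¹:ℝ) * (1 - (0:ℝ)) = 1 := by
    rw [Pr_zero, Real.one_rpow]; ring
  rw [h1, h0] at h
  linarith


lemma norm_PP_le {l : ℝ} (hl0 : 0 < l) (n : ℕ) {z : ℂ} (hz : ‖z‖ ≤ 1) {t : ℝ}
    (ht : 0 ≤ t) : ‖PP l n (z * (t:ℂ))‖ ≤ Pr l n t := by
  refine (norm_sum_le _ _).trans ?_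
  rw [Pr]
  refine Finset.sum_le_sum fun k _ => ?_
  simp only [norm_mul, norm_pow, Complex.norm_real, Real.norm_eq_abs]
  rw [_root_.abs_of_nonneg (aa_pos hl0 k).le, _root_.abs_of_nonneg ht]
  have h1 : (‖z‖ * t) ^ k ≤ t ^ k := by
    apply pow_le_pow_left₀ (by positivity)
    nlinarith
  nlinarith [aa_pos hl0 k, pow_nonneg (mul_nonneg (norm_nonneg z) ht) k]

lemma norm_HH_sub_one_le {l : ℝ} (hl0 : 0 < l) (hl1 : l ≤ 1) (n : ℕ) {z : ℂ}
    (hz : ‖z‖ < 1) : ‖HH l n z - 1‖ ≤ ‖z‖ ^ (n+1) := by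
  have hmem : ∀ t : ℝ, t ∈ Set.uIcc (0:ℝ) 1 → ‖z * (t:ℂ)‖ < 1 := by
    intro t ht
    rw [Set.uIcc_of_le zero_le_one, Set.mem_Icc] at ht
    rw [norm_mul, Complex.norm_real, Real.norm_eq_abs, _root_.abs_of_nonneg ht.1]
    calc ‖z‖ * t ≤ ‖z‖ * 1 := by nlinarith [norm_nonneg z]
    _ < 1 := by simpa using hz
  set G : ℝ → ℂ := fun t => -((cc l n : ℂ) * (z * (t:ℂ)) ^ n
      * PP l n (z * (t:ℂ)) ^ ((l:ℂ)⁻¹ - 1)) * z with hG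
  have hderiv : ∀ t ∈ Set.uIcc (0:ℝ) 1,
      HasDerivAt (fun t : ℝ => HH l n (z * (t:ℂ))) (G t) t := by
    intro t ht
    have hin := hasDerivAt_HH hl0 hl1 n (hmem t ht)
    have hmul : HasDerivAt (fun w : ℂ => z * w) z (t:ℂ) := by
      simpa using (hasDerivAt_id (t:ℂ)).const_mul z
    have h1 := hin.comp (t:ℂ) hmul
    exact h1.comp_ofReal
  have hcont : IntervalIntegrable G MeasureTheory.volume 0 1 := by
    apply ContinuousOn.intervalIntegrable
    intro t ht
    have hA : ContinuousAt (fun t : ℝ => PP l n (z * (t:ℂ))) t :=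
      ((continuous_PP l n).comp (continuous_const.mul Complex.continuous_ofReal)).continuousAt
    have hB : ContinuousAt (fun t : ℝ => PP l n (z * (t:ℂ)) ^ ((l:ℂ)⁻¹ - 1)) t :=
      hA.cpow continuousAt_const (PP_slit hl0 hl1 n (hmem t ht))
    have hC : ContinuousAt (fun t : ℝ => (z * (t:ℂ)) ^ n) t :=
      ((continuous_pow n).comp (continuous_const.mul Complex.continuous_ofReal)).continuousAt
    exact (((((continuousAt_const.mul hC).mul hB).neg).mul continuousAt_const)).continuousWithinAt
  have hFTC := intervalIntegral.integral_eq_sub_of_hasDerivAt hderiv hcont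
  have hval : HH l n (z * ((1:ℝ):ℂ)) - HH l n (z * ((0:ℝ):ℂ)) = HH l n z - 1 := by
    rw [Complex.ofReal_one, Complex.ofReal_zero, mul_one, mul_zero, HH_zero]
  rw [hval] at hFTC
  have hμ : 0 ≤ l⁻¹ - 1 := by
    have : 1 ≤ l⁻¹ := one_le_inv_iff₀.mpr ⟨hl0, hl1⟩
    linarith
  set g : ℝ → ℝ := fun t => ‖z‖ ^ (n+1) * (cc l n * t ^ n * Pr l n t ^ (l⁻¹ - 1 : ℝ)) with hg
  have hbound : ∀ t ∈ Set.uIoc (0:ℝ) 1, ‖G t‖ ≤ g t := by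
    intro t ht
    rw [Set.uIoc_of_le zero_le_one, Set.mem_Ioc] at ht
    have ht0 : (0:ℝ) ≤ t := ht.1.le
    rw [hG, hg]
    rw [norm_mul, norm_neg, norm_mul, norm_mul, norm_pow, norm_mul]
    have e1 : ‖((cc l n : ℝ) : ℂ)‖ = cc l n := by
      rw [Complex.norm_real, Real.norm_eq_abs, _root_.abs_of_nonneg (cc_nonneg hl0 n)]
    have e2 : ((l:ℂ)⁻¹ - 1) = ((l⁻¹ - 1 : ℝ) : ℂ) := by push_cast; ring
    have e3 : ‖PP l n (z * (t:ℂ)) ^ ((l:ℂ)⁻¹ - 1)‖ ≤ Pr l n t ^ (l⁻¹ - 1 : ℝ) := by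
      rw [e2, Complex.norm_cpow_real]
      refine Real.rpow_le_rpow (norm_nonneg _) ?_ hμ
      exact norm_PP_le hl0 n hz.le ht0
    have e4 : ‖(t:ℂ)‖ = t := by
      rw [Complex.norm_real, Real.norm_eq_abs, _root_.abs_of_nonneg ht0]
    rw [e1, e4]
    have hPrpow : 0 ≤ Pr l n t ^ (l⁻¹ - 1 : ℝ) := Real.rpow_nonneg (Pr_pos hl0 n ht0).le _
    have hznn : (0:ℝ) ≤ ‖z‖ := norm_nonneg z
    have htn : (0:ℝ) ≤ t ^ n := pow_nonneg ht0 n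
    have hccn := cc_nonneg hl0 n
    calc cc l n * (‖z‖ * t) ^ n * ‖PP l n (z * (t:ℂ)) ^ ((l:ℂ)⁻¹ - 1)‖ * ‖z‖
        ≤ cc l n * (‖z‖ * t) ^ n * (Pr l n t ^ (l⁻¹ - 1 : ℝ)) * ‖z‖ := by
          have := mul_pow ‖z‖ t n
          nlinarith [pow_nonneg (mul_nonneg hznn ht0) n,
            mul_nonneg (mul_nonneg hccn (pow_nonneg (mul_nonneg hznn ht0) n)) hznn,
            norm_nonneg (PP l n (z * (t:ℂ)) ^ ((l:ℂ)⁻¹ - 1))]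
    _ = ‖z‖ ^ (n+1) * (cc l n * t ^ n * Pr l n t ^ (l⁻¹ - 1 : ℝ)) := by
          rw [mul_pow]; ring
  have hgint : IntervalIntegrable g MeasureTheory.volume 0 1 :=
    (continuousOn_const.mul (contOn_integrand hl0 n)).intervalIntegrable
  have hle := intervalIntegral.norm_integral_le_abs_of_norm_le
    (MeasureTheory.ae_restrict_of_forall_mem measurableSet_uIoc hbound) hgint
  rw [hFTC] at hle
  have hval2 : ∫ t in (0:ℝ)..1, g t = ‖z‖ ^ (n+1) := by
    rw [hg, intervalIntegral.integral_const_mul, integral_eq_one hl0 n, mul_one]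
  rw [hval2, _root_.abs_of_nonneg (pow_nonneg (norm_nonneg z) _)] at hle
  exact hle


lemma div_le_div_of_nonneg_right' {a b c : ℝ} (h : a ≤ b) (hc : 0 < c) : a / c ≤ b / c := by
  gcongr

lemma arg_abs_le_of_close {w : ℂ} {d : ℝ} (hd : d ≤ 1/2) (h : ‖w - 1‖ ≤ d) :
    |w.arg| ≤ 4 * d := by
  have hd0 : 0 ≤ d := le_trans (norm_nonneg _) h
  have him : |w.im| ≤ d := by
    have h1 : |(w - 1).im| ≤ ‖w - 1‖ := Complex.abs_im_le_norm (w - 1)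
    have h2 : (w - 1).im = w.im := by simp
    rw [h2] at h1
    linarith
  have hre : 1 - d ≤ w.re := by
    have h1 : |(w - 1).re| ≤ ‖w - 1‖ := Complex.abs_re_le_norm (w - 1)
    have h2 : (w - 1).re = w.re - 1 := by simp
    rw [h2] at h1
    cases abs_le.mp h1 with
    | intro hl hr => linarith
  have hrepos : 0 < w.re := by linarith
  have habs : 1/2 ≤ ‖w‖ := le_trans (by linarith) (hre.trans (Complex.re_le_norm w))
  have hargle : |w.arg| < Real.pi / 2 := Complex.abs_arg_lt_pi_div_two_iff.mpr (Or.inl hrepos)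
  have habspos : (0:ℝ) < ‖w‖ := by linarith
  have hsin : Real.sin |w.arg| ≤ |w.im| / ‖w‖ := by
    rcases le_or_gt 0 w.arg with h0 | h0
    · rw [_root_.abs_of_nonneg h0, Complex.sin_arg]
      exact div_le_div_of_nonneg_right' (le_abs_self _) habspos
    · rw [_root_.abs_of_neg h0, Real.sin_neg, Complex.sin_arg, ← neg_div]
      exact div_le_div_of_nonneg_right' (neg_le_abs _) habspos
  have hstep := Real.mul_le_sin (abs_nonneg w.arg) hargle.le
  have hx := mul_le_mul_of_nonneg_left hstep Real.pi_pos.le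
  have hxx : Real.pi * (2 / Real.pi * |w.arg|) = 2 * |w.arg| := by
    field_simp
  rw [hxx] at hx
  have h2d : |w.im| / ‖w‖ ≤ 2 * d := by
    rw [div_le_iff₀ (by linarith : (0:ℝ) < ‖w‖)]
    nlinarith
  have hsnn : 0 ≤ Real.sin |w.arg| :=
    Real.sin_nonneg_of_nonneg_of_le_pi (abs_nonneg _)
      (le_trans hargle.le (by linarith [Real.pi_pos]))
  have hs2 : Real.sin |w.arg| ≤ 2 * d := le_trans hsin h2d
  have hπ4 := Real.pi_le_four
  nlinarith

lemma HH_ne_zero_aux {l : ℝ} (hl0 : 0 < l) (hl1 : l ≤ 1) (n : ℕ) {z : ℂ} (hz : ‖z‖ < 1) :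
    0 < (HH l n z).re :=
  rePos_of_close (lt_of_le_of_lt (norm_HH_sub_one_le hl0 hl1 n hz)
    (pow_lt_one₀ (norm_nonneg z) hz (by omega)))

lemma HH_pow_eq {l : ℝ} (hl0 : 0 < l) (hl1 : l ≤ 1) (n : ℕ) :
    Set.EqOn (fun z => HH l n z ^ (l:ℂ)) (fun z => PP l n z * (1 - z) ^ (l:ℂ))
      (Metric.ball (0:ℂ) 1) := by
  have hopen : IsOpen (Metric.ball (0:ℂ) 1) := Metric.isOpen_ball
  have hd1 : DifferentiableOn ℂ (fun z => HH l n z ^ (l:ℂ)) (Metric.ball 0 1) := by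
    intro z hz
    rw [Metric.mem_ball, dist_zero_right] at hz
    have hslt : HH l n z ∈ Complex.slitPlane :=
      Complex.mem_slitPlane_iff.mpr (Or.inl (HH_ne_zero_aux hl0 hl1 n hz))
    exact (((hasDerivAt_HH hl0 hl1 n hz).cpow_const hslt).differentiableAt).differentiableWithinAt
  have hd2 : DifferentiableOn ℂ (fun z => PP l n z * (1 - z) ^ (l:ℂ)) (Metric.ball 0 1) := by
    intro z hz
    rw [Metric.mem_ball, dist_zero_right] at hz
    have h1z : (1 - z) ∈ Complex.slitPlane :=
      Complex.mem_slitPlane_iff.mpr (Or.inl (rePos_one_sub hz))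
    have hin : HasDerivAt (fun w : ℂ => 1 - w) (-1) z := by
      simpa using (hasDerivAt_id z).const_sub 1
    have hdc := hin.cpow_const (c := (l:ℂ)) h1z
    exact ((hasDerivAt_PP l n z).differentiableAt.mul hdc.differentiableAt).differentiableWithinAt
  have ha1 := hd1.analyticOnNhd hopen
  have ha2 := hd2.analyticOnNhd hopen
  set d : ℝ := min (1/2) (l/8) with hdd
  have hd0 : 0 < d := lt_min (by norm_num) (by positivity)
  have hdhalf : d ≤ 1/2 := min_le_left _ _
  have hdl : d ≤ l/8 := min_le_right _ _
  have hev1 : ∀ᶠ z : ℂ in nhds 0, ‖PP l n z - 1‖ < d := by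
    have hc : Filter.Tendsto (PP l n) (nhds 0) (nhds 1) := by
      have := (continuous_PP l n).continuousAt (x := 0)
      rwa [ContinuousAt, PP_zero] at this
    have := hc (Metric.ball_mem_nhds 1 hd0)
    filter_upwards [this] with z hzz
    rw [Set.mem_preimage, Metric.mem_ball, dist_eq_norm] at hzz
    exact hzz
  have hev2 : ∀ᶠ z : ℂ in nhds 0, ‖z‖ < d := by
    have := Metric.ball_mem_nhds (0:ℂ) hd0
    filter_upwards [this] with z hzz
    rwa [Metric.mem_ball, dist_zero_right] at hzz
  have hev : (fun z => HH l n z ^ (l:ℂ)) =ᶠ[nhds 0]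
      (fun z => PP l n z * (1 - z) ^ (l:ℂ)) := by
    filter_upwards [hev1, hev2] with z h1 h2
    have hlC : (l:ℂ) ≠ 0 := by exact_mod_cast ne_of_gt hl0
    set Pz := PP l n z with hPz
    set v : ℂ := 1 - z with hv
    have hPne : Pz ≠ 0 := by
      have : 0 < Pz.re := rePos_of_close (lt_of_lt_of_le h1 (by linarith))
      intro hcon
      rw [hcon] at this
      simp at this
    have hvne : v ≠ 0 := by
      have : 0 < v.re := rePos_of_close (by simpa [hv] using lt_of_lt_of_le h2 (by linarith : d ≤ (1:ℝ)))
      intro hcon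
      rw [hcon] at this
      simp at this
    have hargP : |Pz.arg| ≤ l/2 := by
      have := arg_abs_le_of_close hdhalf h1.le
      linarith
    have hargv : |v.arg| ≤ 2 := by
      have hvc : ‖v - 1‖ ≤ d := by
        simpa [hv, norm_neg] using h2.le
      have := arg_abs_le_of_close hdhalf hvc
      linarith
    -- log of u := Pz ^ (l:ℂ)⁻¹
    set u : ℂ := Pz ^ (l:ℂ)⁻¹ with hu
    have himl : (Complex.log Pz * (l:ℂ)⁻¹).im = Pz.arg * l⁻¹ := by
      rw [show ((l:ℂ))⁻¹ = ((l⁻¹ : ℝ) : ℂ) by push_cast; ring]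
      rw [Complex.mul_im]
      simp [Complex.log_im]
    have hbnd : |Pz.arg * l⁻¹| ≤ 1/2 := by
      rw [abs_mul, _root_.abs_of_nonneg (by positivity : (0:ℝ) ≤ l⁻¹)]
      have hinv : l⁻¹ > 0 := by positivity
      calc |Pz.arg| * l⁻¹ ≤ (l/2) * l⁻¹ := by
            apply mul_le_mul_of_nonneg_right hargP hinv.le
      _ = 1/2 := by
            rw [div_mul_eq_mul_div, mul_inv_cancel₀ (ne_of_gt hl0)]
    have hπ3 : (3:ℝ) < Real.pi := Real.pi_gt_three
    have hue : u = Complex.exp (Complex.log Pz * (l:ℂ)⁻¹) :=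
      Complex.cpow_def_of_ne_zero hPne _
    have hune : u ≠ 0 := by
      rw [hue]; exact Complex.exp_ne_zero _
    have hlogu : Complex.log u = Complex.log Pz * (l:ℂ)⁻¹ := by
      rw [hue]
      apply Complex.log_exp
      · rw [himl]
        cases abs_le.mp hbnd with
        | intro hl hr => linarith
      · rw [himl]
        cases abs_le.mp hbnd with
        | intro hl hr => linarith
    have hargu : u.arg = Pz.arg * l⁻¹ := by
      rw [← Complex.log_im, hlogu, himl]
    have hlogH : Complex.log (u * v) = Complex.log u + Complex.log v := by
      apply Complex.log_mul hune hvne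
      rw [hargu]
      constructor
      · cases abs_le.mp hbnd with
        | intro ha hb =>
          cases abs_le.mp hargv with
          | intro hc hd' => linarith
      · cases abs_le.mp hbnd with
        | intro ha hb =>
          cases abs_le.mp hargv with
          | intro hc hd' => linarith
    show HH l n z ^ (l:ℂ) = Pz * v ^ (l:ℂ)
    have hHH : HH l n z = u * v := rfl
    rw [hHH, Complex.cpow_def_of_ne_zero (mul_ne_zero hune hvne), hlogH, hlogu]
    rw [show (Complex.log Pz * (l:ℂ)⁻¹ + Complex.log v) * (l:ℂ)
        = Complex.log Pz * ((l:ℂ)⁻¹ * (l:ℂ)) + Complex.log v * (l:ℂ) by ring]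
    rw [inv_mul_cancel₀ hlC, mul_one, Complex.exp_add, Complex.exp_log hPne,
      Complex.cpow_def_of_ne_zero hvne]
  exact fun z hz => ha1.eqOn_of_preconnected_of_eventuallyEq ha2
    (convex_ball (0:ℂ) 1).isPreconnected (Metric.mem_ball_self one_pos) hev hz


lemma absB_le_one {B : ℝ} (hB : -1 ≤ B) (hB0 : B < 0) : ‖(B:ℂ)‖ ≤ 1 := by
  rw [Complex.norm_real, Real.norm_eq_abs, abs_le]
  constructor <;> linarith

lemma itd {l B : ℝ} (hl0 : 0 < l) (hB : -1 ≤ B) (hB0 : B < 0) (k : ℕ) :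
    Set.EqOn (iteratedDeriv k (fun w : ℂ => (1 + (B:ℂ) * w) ^ (-(l:ℂ))))
      (fun w : ℂ => (((k.factorial : ℝ) * aa l k : ℝ) : ℂ) * (-(B:ℂ)) ^ k
        * (1 + (B:ℂ) * w) ^ (-(l:ℂ) - k)) (Metric.ball (0:ℂ) 1) := by
  induction k with
  | zero =>
    intro w _
    simp [iteratedDeriv_zero, aa_zero]
  | succ k ih =>
    intro w hw
    rw [iteratedDeriv_succ]
    have hev : iteratedDeriv k (fun w : ℂ => (1 + (B:ℂ) * w) ^ (-(l:ℂ)))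
        =ᶠ[nhds w] (fun w : ℂ => (((k.factorial : ℝ) * aa l k : ℝ) : ℂ) * (-(B:ℂ)) ^ k
          * (1 + (B:ℂ) * w) ^ (-(l:ℂ) - k)) :=
      Filter.eventuallyEq_of_mem (Metric.isOpen_ball.mem_nhds hw) ih
    rw [hev.deriv_eq]
    have hw' : ‖w‖ < 1 := by rwa [Metric.mem_ball, dist_zero_right] at hw
    have hslit : (1 + (B:ℂ) * w) ∈ Complex.slitPlane := by
      apply Complex.mem_slitPlane_of_norm_lt_one
      rw [norm_mul]
      calc ‖(B:ℂ)‖ * ‖w‖ ≤ 1 * ‖w‖ :=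
            mul_le_mul_of_nonneg_right (absB_le_one hB hB0) (norm_nonneg w)
      _ < 1 := by simpa using hw'
    have hinner : HasDerivAt (fun w : ℂ => 1 + (B:ℂ) * w) (B:ℂ) w := by
      simpa using ((hasDerivAt_id w).const_mul (B:ℂ)).const_add 1
    have hd := (hinner.cpow_const (c := -(l:ℂ) - k) hslit).const_mul
      ((((k.factorial : ℝ) * aa l k : ℝ) : ℂ) * (-(B:ℂ)) ^ k)
    rw [hd.deriv]
    have hexp : (-(l:ℂ) - (k:ℂ) - 1) = -(l:ℂ) - ((k+1 : ℕ):ℂ) := by push_cast; ring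
    rw [hexp]
    have hC : (((k+1).factorial : ℝ) * aa l (k+1)) = ((k.factorial : ℝ) * aa l k) * (l + k) := by
      rw [Nat.factorial_succ]
      have := aa_rec l k
      push_cast
      nlinarith [this]
    have hCC := congrArg (fun r : ℝ => (r : ℂ)) hC
    rw [show (((k.factorial : ℝ) * aa l k * (l + (k:ℝ)) : ℝ) : ℂ)
        = (((k.factorial : ℝ) * aa l k : ℝ) : ℂ) * ((l:ℂ) + (k:ℂ)) by push_cast; ring] at hCC
    linear_combination (-(-(B:ℂ)) ^ (k+1) * ((1 + (B:ℂ) * w) ^ (-(l:ℂ) - ((k+1:ℕ):ℂ)))) * hCC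


lemma partialSum_eq {l B : ℝ} (hl0 : 0 < l) (hB : -1 ≤ B) (hB0 : B < 0) (n : ℕ) (z : ℂ) :
    partialSum (fun w => (1 + (B:ℂ) * w) ^ (-(l:ℂ))) n z = PP l n (-(B:ℂ) * z) := by
  rw [partialSum, PP]
  refine Finset.sum_congr rfl fun k _ => ?_
  have h0 : (0:ℂ) ∈ Metric.ball (0:ℂ) 1 := Metric.mem_ball_self one_pos
  rw [itd hl0 hB hB0 k h0]
  have hfac : ((k.factorial : ℂ)) ≠ 0 := Nat.cast_ne_zero.mpr k.factorial_ne_zero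
  simp only [mul_zero, add_zero, Complex.one_cpow]
  rw [mul_pow]
  push_cast
  field_simp

end V0

theorem v0_stable (l B : ℝ) (hl0 : 0 < l) (hl1 : l ≤ 1) (hB : -1 ≤ B) (hB0 : B < 0) (n : ℕ) :
    IsSubordinate
      (fun z => partialSum (fun w => (1 + (B : ℂ) * w) ^ (-(l : ℂ))) n z *
        (1 + (B : ℂ) * z) ^ (l : ℂ))
      (fun z => (1 + (B : ℂ) * z) ^ (l : ℂ)) := by
  classical
  have hBne : (B:ℂ) ≠ 0 := by
    simp only [ne_eq, Complex.ofReal_eq_zero]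
    exact ne_of_lt hB0
  have habsB : ∀ z : ℂ, ‖-(B:ℂ) * z‖ ≤ ‖z‖ := by
    intro z
    rw [norm_mul, norm_neg]
    calc ‖(B:ℂ)‖ * ‖z‖ ≤ 1 * ‖z‖ :=
          mul_le_mul_of_nonneg_right (V0.absB_le_one hB hB0) (norm_nonneg z)
    _ = ‖z‖ := one_mul _
  refine ⟨fun z => (1 - V0.HH l n (-(B:ℂ) * z)) / (-(B:ℂ)), ?_, ?_, ?_, ?_⟩
  · -- differentiability
    intro z hz
    rw [Metric.mem_ball, dist_zero_right] at hz
    have hmem : ‖-(B:ℂ) * z‖ < 1 := lt_of_le_of_lt (habsB z) hz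
    have hH : DifferentiableAt ℂ (V0.HH l n) (-(B:ℂ) * z) :=
      (V0.hasDerivAt_HH hl0 hl1 n hmem).differentiableAt
    have hg : DifferentiableAt ℂ (fun z : ℂ => -(B:ℂ) * z) z :=
      (differentiable_id.const_mul _).differentiableAt
    have h1 : DifferentiableAt ℂ (fun z : ℂ => V0.HH l n (-(B:ℂ) * z)) z := hH.comp z hg
    exact (((differentiableAt_const (1:ℂ)).sub h1).div_const _).differentiableWithinAt
  · -- value at 0
    simp [V0.HH_zero]
  · -- maps ball to ball
    intro z hz
    rw [Metric.mem_ball, dist_zero_right] at hz ⊢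
    have hmem : ‖-(B:ℂ) * z‖ < 1 := lt_of_le_of_lt (habsB z) hz
    have hkey := V0.norm_HH_sub_one_le hl0 hl1 n hmem
    rw [norm_div, norm_neg]
    have hBpos : 0 < ‖(B:ℂ)‖ := by
      rw [norm_pos_iff]
      exact hBne
    have h2 : ‖1 - V0.HH l n (-(B:ℂ) * z)‖ ≤ (‖(B:ℂ)‖ * ‖z‖) ^ (n+1) := by
      rw [norm_sub_rev]
      calc ‖V0.HH l n (-(B:ℂ) * z) - 1‖ ≤ ‖-(B:ℂ) * z‖ ^ (n+1) := hkey
      _ = (‖(B:ℂ)‖ * ‖z‖) ^ (n+1) := by rw [norm_mul, norm_neg]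
    have hb0 : ‖(B:ℂ)‖ ≠ 0 := ne_of_gt hBpos
    have h3 : (‖(B:ℂ)‖ * ‖z‖) ^ (n+1) / ‖(B:ℂ)‖ = ‖(B:ℂ)‖ ^ n * ‖z‖ ^ (n+1) := by
      rw [mul_pow, pow_succ,
        show ‖(B:ℂ)‖ ^ n * ‖(B:ℂ)‖ * ‖z‖ ^ (n+1) = ‖(B:ℂ)‖ * (‖(B:ℂ)‖ ^ n * ‖z‖ ^ (n+1)) by ring,
        mul_div_cancel_left₀ _ hb0]
    calc ‖1 - V0.HH l n (-(B:ℂ) * z)‖ / ‖(B:ℂ)‖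
        ≤ (‖(B:ℂ)‖ * ‖z‖) ^ (n+1) / ‖(B:ℂ)‖ := by
          apply V0.div_le_div_of_nonneg_right' h2 hBpos
    _ = ‖(B:ℂ)‖ ^ n * ‖z‖ ^ (n+1) := h3
    _ ≤ 1 * ‖z‖ ^ (n+1) := by
          apply mul_le_mul_of_nonneg_right (pow_le_one₀ (norm_nonneg _) (V0.absB_le_one hB hB0))
            (pow_nonneg (norm_nonneg z) _)
    _ = ‖z‖ ^ (n+1) := one_mul _
    _ < 1 := pow_lt_one₀ (norm_nonneg z) hz (by omega)
  · -- functional equation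
    intro z hz
    rw [Metric.mem_ball, dist_zero_right] at hz
    have hmem : ‖-(B:ℂ) * z‖ < 1 := lt_of_le_of_lt (habsB z) hz
    have hmem' : -(B:ℂ) * z ∈ Metric.ball (0:ℂ) 1 := by
      rwa [Metric.mem_ball, dist_zero_right]
    have harg : (1 + (B:ℂ) * ((1 - V0.HH l n (-(B:ℂ) * z)) / (-(B:ℂ))))
        = V0.HH l n (-(B:ℂ) * z) := by
      rw [div_neg, mul_neg, ← mul_div_assoc, mul_div_cancel_left₀ _ hBne]
      ring
    show partialSum (fun w => (1 + (B:ℂ) * w) ^ (-(l:ℂ))) n z * (1 + (B:ℂ) * z) ^ (l:ℂ)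
        = (1 + (B:ℂ) * ((1 - V0.HH l n (-(B:ℂ) * z)) / (-(B:ℂ)))) ^ (l:ℂ)
    rw [harg]
    have hEq := V0.HH_pow_eq hl0 hl1 n hmem'
    simp only at hEq
    rw [hEq, V0.partialSum_eq hl0 hB hB0 n z]
    congr 1
    ring
end

section
/- Let α, β > 0 and B ∈ [−1, 0). If F and G are analytic on the open unit disk 𝔻 with F ≺ (1+Bz)^{α} and G ≺ (1+Bz)^{β}, then the product satisfies F·G ≺ (1+Bz)^{α+β} on 𝔻. -/
set_option maxHeartbeats 1000000

open Complex Metric Real Set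

/-- Two-term Hölder inequality. -/
lemma holder2 {t u₁ u₂ v₁ v₂ : ℝ} (ht0 : 0 ≤ t) (ht1 : t ≤ 1)
    (hu₁ : 0 ≤ u₁) (hu₂ : 0 ≤ u₂) (hv₁ : 0 ≤ v₁) (hv₂ : 0 ≤ v₂)
    (hU : 0 < u₁ + u₂) (hV : 0 < v₁ + v₂) :
    u₁ ^ t * v₁ ^ (1 - t) + u₂ ^ t * v₂ ^ (1 - t)
      ≤ (u₁ + u₂) ^ t * (v₁ + v₂) ^ (1 - t) := by
  have hUV : 0 < (u₁ + u₂) ^ t * (v₁ + v₂) ^ (1 - t) :=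
    mul_pos (Real.rpow_pos_of_pos hU t) (Real.rpow_pos_of_pos hV _)
  have key : ∀ u v : ℝ, 0 ≤ u → 0 ≤ v →
      u ^ t * v ^ (1 - t) ≤ (t * (u / (u₁ + u₂)) + (1 - t) * (v / (v₁ + v₂)))
        * ((u₁ + u₂) ^ t * (v₁ + v₂) ^ (1 - t)) := by
    intro u v hu hv
    have h := Real.geom_mean_le_arith_mean2_weighted (w₁ := t) (w₂ := 1 - t)
      (p₁ := u / (u₁ + u₂)) (p₂ := v / (v₁ + v₂)) ht0 (by linarith)
      (div_nonneg hu hU.le) (div_nonneg hv hV.le) (by ring)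
    rw [Real.div_rpow hu hU.le, Real.div_rpow hv hV.le, div_mul_div_comm,
      div_le_iff₀ hUV] at h
    exact h
  have h₁ := key u₁ v₁ hu₁ hv₁
  have h₂ := key u₂ v₂ hu₂ hv₂
  have hsum : (t * (u₁ / (u₁ + u₂)) + (1 - t) * (v₁ / (v₁ + v₂)))
      + (t * (u₂ / (u₁ + u₂)) + (1 - t) * (v₂ / (v₁ + v₂))) = 1 := by
    field_simp
    ring
  have := add_le_add h₁ h₂
  rwa [← add_mul, hsum, one_mul] at this

lemma re_pos_of_abs_sub_one_lt {a : ℂ} (h : ‖a - 1‖ < 1) : 0 < a.re := by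
  have h1 : |(a - 1).re| ≤ ‖a - 1‖ := Complex.abs_re_le_norm _
  have h2 : (a - 1).re = a.re - 1 := by simp
  have h3 := neg_abs_le (a - 1).re
  linarith [h3, h1, h]

/-- Key geometric lemma: the disk `B(1,r)`, `0 < r ≤ 1`, is closed under weighted
geometric means. -/
lemma key_lemma {r t : ℝ} (hr0 : 0 < r) (hr1 : r ≤ 1) (ht0 : 0 < t) (ht1 : t < 1)
    {a b : ℂ} (ha : ‖a - 1‖ < r) (hb : ‖b - 1‖ < r) :
    ‖Complex.exp ((t : ℂ) * Complex.log a
      + ((1 - t : ℝ) : ℂ) * Complex.log b) - 1‖ < r := by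
  have hra : 0 < a.re := re_pos_of_abs_sub_one_lt (lt_of_lt_of_le ha hr1)
  have hrb : 0 < b.re := re_pos_of_abs_sub_one_lt (lt_of_lt_of_le hb hr1)
  have ha0 : a ≠ 0 := fun h => by simp [h] at hra
  have hb0 : b ≠ 0 := fun h => by simp [h] at hrb
  set A : ℝ := ‖a‖ with hAdef
  set C : ℝ := ‖b‖ with hCdef
  have hA : 0 < A := norm_pos_iff.mpr ha0
  have hC : 0 < C := norm_pos_iff.mpr hb0
  set s : ℝ := 1 - r ^ 2 with hsdef
  have hs0 : 0 ≤ s := by nlinarith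
  -- main quantitative hypotheses
  have hmaina : A ^ 2 + s < 2 * a.re := by
    have h1 : ‖a - 1‖ ^ 2 < r ^ 2 :=
      pow_lt_pow_left₀ ha (norm_nonneg _) two_ne_zero
    have h2 : ‖a - 1‖ ^ 2 = (a.re - 1) ^ 2 + a.im ^ 2 := by
      rw [Complex.sq_norm, Complex.normSq_apply]; simp [Complex.sub_re, Complex.sub_im]; ring
    have h3 : A ^ 2 = a.re ^ 2 + a.im ^ 2 := by
      rw [hAdef, Complex.sq_norm, Complex.normSq_apply]; ring
    nlinarith
  have hmainb : C ^ 2 + s < 2 * b.re := by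
    have h1 : ‖b - 1‖ ^ 2 < r ^ 2 :=
      pow_lt_pow_left₀ hb (norm_nonneg _) two_ne_zero
    have h2 : ‖b - 1‖ ^ 2 = (b.re - 1) ^ 2 + b.im ^ 2 := by
      rw [Complex.sq_norm, Complex.normSq_apply]; simp [Complex.sub_re, Complex.sub_im]; ring
    have h3 : C ^ 2 = b.re ^ 2 + b.im ^ 2 := by
      rw [hCdef, Complex.sq_norm, Complex.normSq_apply]; ring
    nlinarith
  have hca : Real.cos a.arg = a.re / A := Complex.cos_arg ha0
  have hcb : Real.cos b.arg = b.re / C := Complex.cos_arg hb0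
  have hya : A + s / A < 2 * Real.cos a.arg := by
    rw [hca, ← mul_div_assoc, lt_div_iff₀ hA]
    have : (A + s / A) * A = A ^ 2 + s := by field_simp
    rw [this]; exact hmaina
  have hyb : C + s / C < 2 * Real.cos b.arg := by
    rw [hcb, ← mul_div_assoc, lt_div_iff₀ hC]
    have : (C + s / C) * C = C ^ 2 + s := by field_simp
    rw [this]; exact hmainb
  have hcosa : 0 < Real.cos a.arg := by
    have : 0 < A + s / A := by positivity
    linarith
  have hcosb : 0 < Real.cos b.arg := by
    have : 0 < C + s / C := by positivity
    linarith
  -- arguments lie in (-π/2, π/2)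
  have hθa : |a.arg| < π / 2 := Complex.abs_arg_lt_pi_div_two_iff.mpr (Or.inl hra)
  have hθb : |b.arg| < π / 2 := Complex.abs_arg_lt_pi_div_two_iff.mpr (Or.inl hrb)
  set X : ℝ := t * Real.log A + (1 - t) * Real.log C with hXdef
  set Θ : ℝ := t * a.arg + (1 - t) * b.arg with hΘdef
  -- exp X as a geometric mean
  have hEX : Real.exp X = A ^ t * C ^ (1 - t) := by
    rw [Real.rpow_def_of_pos hA, Real.rpow_def_of_pos hC, ← Real.exp_add]
    congr 1; rw [hXdef]; ring
  have hss : s ^ t * s ^ (1 - t) = s := by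
    rcases eq_or_lt_of_le hs0 with h | h
    · rw [← h, Real.zero_rpow (ne_of_gt ht0)]; ring
    · rw [← Real.rpow_add h]; simp
  have hEXinv : s * Real.exp (-X) = (s / A) ^ t * (s / C) ^ (1 - t) := by
    rw [Real.div_rpow hs0 hA.le, Real.div_rpow hs0 hC.le, div_mul_div_comm, hss,
      ← hEX, Real.exp_neg]
    ring
  -- the chain of inequalities
  have hH := holder2 ht0.le ht1.le hA.le (by positivity : (0:ℝ) ≤ s / A) hC.le
    (by positivity : (0:ℝ) ≤ s / C) (by positivity) (by positivity)
  have hstrict : (A + s / A) ^ t * (C + s / C) ^ (1 - t)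
      < (2 * Real.cos a.arg) ^ t * (2 * Real.cos b.arg) ^ (1 - t) := by
    have h1 : (A + s / A) ^ t < (2 * Real.cos a.arg) ^ t :=
      Real.rpow_lt_rpow (by positivity) hya ht0
    have h2 : (C + s / C) ^ (1 - t) < (2 * Real.cos b.arg) ^ (1 - t) :=
      Real.rpow_lt_rpow (by positivity) hyb (by linarith)
    exact mul_lt_mul'' h1 h2 (Real.rpow_nonneg (by positivity) _)
      (Real.rpow_nonneg (by positivity) _)
  have hgeom : (2 * Real.cos a.arg) ^ t * (2 * Real.cos b.arg) ^ (1 - t)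
      = 2 * ((Real.cos a.arg) ^ t * (Real.cos b.arg) ^ (1 - t)) := by
    rw [Real.mul_rpow (by norm_num) hcosa.le, Real.mul_rpow (by norm_num) hcosb.le]
    have : (2:ℝ) ^ t * 2 ^ (1 - t) = 2 := by
      rw [← Real.rpow_add (by norm_num)]; simp
    calc (2:ℝ) ^ t * Real.cos a.arg ^ t * ((2:ℝ) ^ (1 - t) * Real.cos b.arg ^ (1 - t))
        = ((2:ℝ) ^ t * 2 ^ (1 - t)) * (Real.cos a.arg ^ t * Real.cos b.arg ^ (1 - t)) := by ring
      _ = 2 * ((Real.cos a.arg) ^ t * (Real.cos b.arg) ^ (1 - t)) := by rw [this]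
  have hAM : (Real.cos a.arg) ^ t * (Real.cos b.arg) ^ (1 - t)
      ≤ t * Real.cos a.arg + (1 - t) * Real.cos b.arg :=
    Real.geom_mean_le_arith_mean2_weighted ht0.le (by linarith) hcosa.le hcosb.le (by ring)
  have hconc : t * Real.cos a.arg + (1 - t) * Real.cos b.arg ≤ Real.cos Θ := by
    have hma : a.arg ∈ Icc (-(π / 2)) (π / 2) := by
      constructor <;> [linarith [abs_lt.mp hθa]; linarith [abs_lt.mp hθa]]
    have hmb : b.arg ∈ Icc (-(π / 2)) (π / 2) := by
      constructor <;> [linarith [abs_lt.mp hθb]; linarith [abs_lt.mp hθb]]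
    have hw2 : (0:ℝ) ≤ 1 - t := by linarith
    have hw12 : t + (1 - t) = 1 := by ring
    have := strictConcaveOn_cos_Icc.concaveOn.2 hma hmb ht0.le hw2 hw12
    simpa [smul_eq_mul, hΘdef] using this
  have hchain : Real.exp X + s * Real.exp (-X) < 2 * Real.cos Θ := by
    rw [hEX, hEXinv]
    calc A ^ t * C ^ (1 - t) + (s / A) ^ t * (s / C) ^ (1 - t)
        ≤ (A + s / A) ^ t * (C + s / C) ^ (1 - t) := hH
      _ < (2 * Real.cos a.arg) ^ t * (2 * Real.cos b.arg) ^ (1 - t) := hstrict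
      _ = 2 * ((Real.cos a.arg) ^ t * (Real.cos b.arg) ^ (1 - t)) := hgeom
      _ ≤ 2 * (t * Real.cos a.arg + (1 - t) * Real.cos b.arg) := by linarith
      _ ≤ 2 * Real.cos Θ := by linarith
  have hmain : Real.exp X ^ 2 + s < 2 * Real.exp X * Real.cos Θ := by
    have hinv : Real.exp (-X) * Real.exp X = 1 := by rw [← Real.exp_add]; simp
    have h := mul_lt_mul_of_pos_right hchain (Real.exp_pos X)
    nlinarith [h, hinv]
  -- translate back to ℂ
  set w : ℂ := (t : ℂ) * Complex.log a + ((1 - t : ℝ) : ℂ) * Complex.log b with hwdef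
  have hwre : w.re = X := by
    rw [hwdef, hXdef]
    simp [Complex.add_re, Complex.mul_re, Complex.log_re, Complex.log_im]
    rfl
  have hwim : w.im = Θ := by
    rw [hwdef, hΘdef]
    simp [Complex.add_im, Complex.mul_im, Complex.log_re, Complex.log_im]
  have hsq : ‖Complex.exp w - 1‖ ^ 2 < r ^ 2 := by
    rw [Complex.sq_norm, Complex.normSq_apply]
    simp only [Complex.sub_re, Complex.sub_im, Complex.exp_re, Complex.exp_im,
      Complex.one_re, Complex.one_im, hwre, hwim]
    have hpyth := Real.sin_sq_add_cos_sq Θ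
    nlinarith [Real.exp_pos X, hmain]
  exact lt_of_pow_lt_pow_left₀ 2 hr0.le hsq


theorem subordinate_mul_pow (α β B : ℝ) (hα : 0 < α) (hβ : 0 < β)
    (hB : -1 ≤ B) (hB0 : B < 0) (F G : ℂ → ℂ)
    (hF : DifferentiableOn ℂ F (Metric.ball 0 1))
    (hG : DifferentiableOn ℂ G (Metric.ball 0 1))
    (hFs : IsSubordinate F (fun z => (1 + (B : ℂ) * z) ^ (α : ℂ)))
    (hGs : IsSubordinate G (fun z => (1 + (B : ℂ) * z) ^ (β : ℂ))) :
    IsSubordinate (fun z => F z * G z)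
      (fun z => (1 + (B : ℂ) * z) ^ ((α : ℂ) + (β : ℂ))) := by
  obtain ⟨ω₁, hω₁d, hω₁0, hω₁m, hω₁e⟩ := hFs
  obtain ⟨ω₂, hω₂d, hω₂0, hω₂m, hω₂e⟩ := hGs
  set t : ℝ := α / (α + β) with htdef
  have hαβ : 0 < α + β := by linarith
  have ht0 : 0 < t := div_pos hα hαβ
  have ht1 : t < 1 := (div_lt_one hαβ).mpr (by linarith)
  have hBne : (B : ℂ) ≠ 0 := Complex.ofReal_ne_zero.mpr hB0.ne
  have hnegB0 : 0 < -B := by linarith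
  have hnegB1 : -B ≤ 1 := by linarith
  -- the basic estimate for points in the disk
  have habs : ∀ (ω' : ℂ → ℂ), (∀ z ∈ Metric.ball (0 : ℂ) 1, ω' z ∈ Metric.ball (0 : ℂ) 1) →
      ∀ z ∈ Metric.ball (0 : ℂ) 1, ‖(1 + (B : ℂ) * ω' z) - 1‖ < -B := by
    intro ω' hm z hz
    have h1 : ‖ω' z‖ < 1 := by
      have := hm z hz
      rwa [Metric.mem_ball, Complex.dist_eq, sub_zero] at this
    have : (1 + (B : ℂ) * ω' z) - 1 = (B : ℂ) * ω' z := by ring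
    rw [this, norm_mul, Complex.norm_real, Real.norm_eq_abs, abs_of_neg hB0]
    calc -B * ‖ω' z‖ < -B * 1 := by
          exact mul_lt_mul_of_pos_left h1 hnegB0
      _ = -B := mul_one _
  have hre : ∀ (ω' : ℂ → ℂ), (∀ z ∈ Metric.ball (0 : ℂ) 1, ω' z ∈ Metric.ball (0 : ℂ) 1) →
      ∀ z ∈ Metric.ball (0 : ℂ) 1, 0 < (1 + (B : ℂ) * ω' z).re := by
    intro ω' hm z hz
    exact re_pos_of_abs_sub_one_lt (lt_of_lt_of_le (habs ω' hm z hz) hnegB1)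
  refine ⟨fun z => (Complex.exp ((t : ℂ) * Complex.log (1 + (B : ℂ) * ω₁ z)
      + ((1 - t : ℝ) : ℂ) * Complex.log (1 + (B : ℂ) * ω₂ z)) - 1) / B, ?_, ?_, ?_, ?_⟩
  · -- differentiability
    have hlog : ∀ (ω' : ℂ → ℂ), DifferentiableOn ℂ ω' (Metric.ball 0 1) →
        (∀ z ∈ Metric.ball (0 : ℂ) 1, ω' z ∈ Metric.ball (0 : ℂ) 1) →
        DifferentiableOn ℂ (fun z => Complex.log (1 + (B : ℂ) * ω' z)) (Metric.ball 0 1) := by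
      intro ω' hd hm z hz
      have h1 : DifferentiableAt ℂ (fun z => 1 + (B : ℂ) * ω' z) z :=
        (differentiableAt_const _).add ((differentiableAt_const _).mul
          ((hd z hz).differentiableAt (Metric.isOpen_ball.mem_nhds hz)))
      exact ((Complex.differentiableAt_log
        (Complex.mem_slitPlane_iff.mpr (Or.inl (hre ω' hm z hz)))).comp z h1).differentiableWithinAt
    exact ((((hlog ω₁ hω₁d hω₁m).const_mul _).add
      ((hlog ω₂ hω₂d hω₂m).const_mul _)).cexp.sub (differentiableOn_const 1)).div_const _
  · -- value at 0
    simp [hω₁0, hω₂0]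
  · -- maps the disk to the disk
    intro z hz
    rw [Metric.mem_ball, Complex.dist_eq, sub_zero]
    beta_reduce
    rw [norm_div, Complex.norm_real, Real.norm_eq_abs,
      abs_of_neg hB0, div_lt_one hnegB0]
    exact key_lemma hnegB0 hnegB1 ht0 ht1 (habs ω₁ hω₁m z hz) (habs ω₂ hω₂m z hz)
  · -- the subordination identity
    intro z hz
    have ha0 : (1 + (B : ℂ) * ω₁ z) ≠ 0 := by
      intro h
      have := hre ω₁ hω₁m z hz
      rw [h] at this; simp at this
    have hb0 : (1 + (B : ℂ) * ω₂ z) ≠ 0 := by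
      intro h
      have := hre ω₂ hω₂m z hz
      rw [h] at this; simp at this
    set w : ℂ := (t : ℂ) * Complex.log (1 + (B : ℂ) * ω₁ z)
      + ((1 - t : ℝ) : ℂ) * Complex.log (1 + (B : ℂ) * ω₂ z) with hwdef
    have h1 : 1 + (B : ℂ) * ((Complex.exp w - 1) / B) = Complex.exp w := by
      field_simp
      ring
    have hθa : |(1 + (B : ℂ) * ω₁ z).arg| < π / 2 :=
      Complex.abs_arg_lt_pi_div_two_iff.mpr (Or.inl (hre ω₁ hω₁m z hz))
    have hθb : |(1 + (B : ℂ) * ω₂ z).arg| < π / 2 :=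
      Complex.abs_arg_lt_pi_div_two_iff.mpr (Or.inl (hre ω₂ hω₂m z hz))
    have hwim : w.im = t * (1 + (B : ℂ) * ω₁ z).arg + (1 - t) * (1 + (B : ℂ) * ω₂ z).arg := by
      rw [hwdef]
      simp [Complex.add_im, Complex.mul_im, Complex.log_re, Complex.log_im]
    have hπ : 0 < π := Real.pi_pos
    have him1 : -π < w.im := by
      rw [hwim]
      nlinarith [abs_lt.mp hθa, abs_lt.mp hθb]
    have him2 : w.im ≤ π := by
      rw [hwim]
      nlinarith [abs_lt.mp hθa, abs_lt.mp hθb]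
    have h1r : (α + β) * t = α := by
      rw [htdef]; field_simp
    have h2r : (α + β) * (1 - t) = β := by
      rw [htdef]; field_simp; try ring
    simp only [hω₁e z hz, hω₂e z hz]
    rw [h1,
      Complex.cpow_def_of_ne_zero (Complex.exp_ne_zero w), Complex.log_exp him1 him2,
      Complex.cpow_def_of_ne_zero ha0, Complex.cpow_def_of_ne_zero hb0, ← Complex.exp_add]
    rw [mul_comm (Complex.log (1 + (B : ℂ) * ω₁ z)), mul_comm (Complex.log (1 + (B : ℂ) * ω₂ z))]
    congr 1
    have hcast : ((α : ℂ) + (β : ℂ)) * w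
        = (((α + β) * t : ℝ) : ℂ) * Complex.log (1 + (B : ℂ) * ω₁ z)
          + (((α + β) * (1 - t) : ℝ) : ℂ) * Complex.log (1 + (B : ℂ) * ω₂ z) := by
      rw [hwdef]; push_cast; ring
    rw [mul_comm w, hcast, h1r, h2r]
end
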